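/- arXiv:1903.01140 — 6 statements merged into one kernel-verified Lean document; each statement's English description precedes it below -/
import Mathlib

section
/- Suppose that ⟨f_n⟩ is a sequence of polynomials with f_n(0) ≠ 0 for all n, lim_{n→∞} f_n(0) exists and is nonzero, and f_n → f weakly for a formal power series f. Then for every positive integer k the sequence ⟨s_k(f_n)⟩ converges. Moreover, if f represents an analytic function in a neighborhood of 0, then lim_{n→∞} s_k(f_n) = −(1/(k−1)!)·(f'/f)^{(k−1)}(0) for every positive integer k. -/
noncomputable section
open Filter Polynomial Topology

/-- `f_n → a` weakly: for every `k`, `f_n^{(k)}(0) → k! * a_k`. -/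
def WeakConv (f : ℕ → Polynomial ℂ) (a : ℕ → ℂ) : Prop :=
  ∀ k : ℕ, Tendsto (fun n => (Polynomial.derivative^[k] (f n)).eval 0) atTop
    (𝓝 ((Nat.factorial k : ℂ) * a k))

def WeakConvR (f : ℕ → Polynomial ℝ) (a : ℕ → ℝ) : Prop :=
  ∀ k : ℕ, Tendsto (fun n => (Polynomial.derivative^[k] (f n)).eval 0) atTop
    (𝓝 ((Nat.factorial k : ℝ) * a k))

/-- The nonnegative real axis `[0,∞)` as a subset of `ℂ`. -/
def S0 : Set ℂ := {z : ℂ | z.im = 0 ∧ 0 ≤ z.re}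

/-- The Pólya–Obrechkoff class. -/
def PolyaObrechkoff (F : ℂ → ℂ) : Prop :=
  ∃ (ι : Type) (_ : Countable ι) (c : ℂ) (m : ℕ) (α : ℝ) (β : ℂ) (a : ι → ℂ),
    0 ≤ α ∧
    (∀ j, a j ≠ 0 ∧ 0 ≤ (a j).im) ∧
    Summable (fun j => (‖a j‖⁻¹) ^ 2) ∧
    Summable (fun j => (-(a j)⁻¹).im) ∧
    (∑' j, (-(a j)⁻¹).im) ≤ β.im ∧
    ∀ z : ℂ, F z = c * z ^ m * Complex.exp (-(α : ℂ) * z ^ 2 + β * z) *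
      ∏' j, ((1 - z / a j) * Complex.exp (z / a j))

/-- The Laguerre–Pólya class. -/
def LaguerrePolya (F : ℂ → ℂ) : Prop :=
  ∃ (ι : Type) (_ : Countable ι) (c : ℝ) (m : ℕ) (α : ℝ) (β : ℝ) (a : ι → ℝ),
    0 ≤ α ∧
    (∀ j, a j ≠ 0) ∧
    Summable (fun j => ((a j)⁻¹) ^ 2) ∧
    ∀ z : ℂ, F z = (c : ℂ) * z ^ m * Complex.exp (-(α : ℂ) * z ^ 2 + (β : ℂ) * z) *
      ∏' j, ((1 - z / (a j : ℂ)) * Complex.exp (z / (a j : ℂ)))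

/-- The class `LP*`: products of a real polynomial with a Laguerre–Pólya function. -/
def LPStar (F : ℂ → ℂ) : Prop :=
  ∃ (P : Polynomial ℝ) (g : ℂ → ℂ), LaguerrePolya g ∧
    ∀ z : ℂ, F z = (P.map (algebraMap ℝ ℂ)).eval z * g z

/-- The class `LP(S₀)`. -/
def LPS0 (F : ℂ → ℂ) : Prop :=
  ∃ (ι : Type) (_ : Countable ι) (c : ℝ) (m : ℕ) (α : ℝ) (a : ι → ℝ),
    0 ≤ α ∧
    (∀ j, 0 < a j) ∧
    Summable (fun j => (a j)⁻¹) ∧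
    ∀ z : ℂ, F z = (c : ℂ) * z ^ m * Complex.exp (-(α : ℂ) * z) *
      ∏' j, (1 - z / (a j : ℂ))

/-- The class `LP(S₀)*`. -/
def LPS0Star (F : ℂ → ℂ) : Prop :=
  ∃ (P : Polynomial ℝ) (g : ℂ → ℂ), LPS0 g ∧
    ∀ z : ℂ, F z = (P.map (algebraMap ℝ ℂ)).eval z * g z

/-- `s_k(f) = Σ_j a_j^{-k}`, sum over the roots of `f` with multiplicity. -/
def sPow (k : ℕ) (f : Polynomial ℂ) : ℂ := (f.roots.map (fun a => (a⁻¹) ^ k)).sum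

/-- `s̃_k(f) = Σ_j |a_j|^{-k}`, sum over the roots of `f` with multiplicity. -/
def sAbs (k : ℕ) (f : Polynomial ℂ) : ℝ :=
  (f.roots.map (fun a => (‖a‖⁻¹) ^ k)).sum

open scoped Classical in
/-- `N(f;X)`: number of zeros of the polynomial `f` in `X`, with multiplicity. -/
def NPoly (g : Polynomial ℂ) (X : Set ℂ) : ℕ :=
  Multiset.card (g.roots.filter (fun z => z ∈ X))

/-- `N(f;X)` for a real polynomial, zeros counted in `ℂ`. -/
def NPolyR (g : Polynomial ℝ) (X : Set ℂ) : ℕ := NPoly (g.map (algebraMap ℝ ℂ)) X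

/-- The `n`-th Jensen polynomial of the series `Σ a_k z^k`. -/
def jensen (a : ℕ → ℂ) (n : ℕ) : Polynomial ℂ :=
  ∑ k ∈ Finset.range (n + 1),
    Polynomial.C ((n.factorial : ℂ) / ((n - k).factorial : ℂ) * a k) * Polynomial.X ^ k

def jensenR (a : ℕ → ℝ) (n : ℕ) : Polynomial ℝ :=
  ∑ k ∈ Finset.range (n + 1),
    Polynomial.C ((n.factorial : ℝ) / ((n - k).factorial : ℝ) * a k) * Polynomial.X ^ k

/-- The `n`-th Appell polynomial of the series `Σ a_k z^k`. -/
def appellR (a : ℕ → ℝ) (n : ℕ) : Polynomial ℝ :=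
  ∑ k ∈ Finset.range (n + 1),
    Polynomial.C ((n.factorial : ℝ) / ((n - k).factorial : ℝ) * a k) * Polynomial.X ^ (n - k)

/-- Order of vanishing of `F` at `z` (least `m` with `F^{(m)}(z) ≠ 0`; `0` if none). -/
def zeroOrder (F : ℂ → ℂ) (z : ℂ) : ℕ := sInf {m : ℕ | iteratedDeriv m F z ≠ 0}

/-- `N(F;X)` for an entire function: zeros in `X` counted with multiplicity. -/
def NEnt (F : ℂ → ℂ) (X : Set ℂ) : ℕ∞ := ∑' z : X, (zeroOrder F z : ℕ∞)

namespace PfAux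


def GG (D : ℕ → ℂ) : ℕ → ℂ
  | j => (D (j+1) - ∑ i ∈ (Finset.range j).attach,
      (j.choose i.1 : ℂ) * (GG D i.1 * D (j - i.1))) / D 0
decreasing_by exact Finset.mem_range.mp i.2

lemma GG_def (D : ℕ → ℂ) (j : ℕ) :
    GG D j = (D (j+1) - ∑ i ∈ Finset.range j,
      (j.choose i : ℂ) * (GG D i * D (j - i))) / D 0 := by
  rw [GG, Finset.sum_attach (Finset.range j) (fun i => (j.choose i : ℂ) * (GG D i * D (j - i)))]

lemma GG_unique (D E : ℕ → ℂ) (h0 : D 0 ≠ 0)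
    (h : ∀ j, D (j+1) = ∑ i ∈ Finset.range (j+1), (j.choose i : ℂ) * (E i * D (j - i))) :
    ∀ j, E j = GG D j := by
  intro j
  induction j using Nat.strong_induction_on with
  | _ j ih =>
    rw [GG_def, h j, Finset.sum_range_succ,
      Finset.sum_congr rfl (fun i hi => by rw [ih i (Finset.mem_range.mp hi)])]
    simp only [Nat.choose_self, Nat.cast_one, one_mul, Nat.sub_self]
    rw [add_sub_cancel_left, mul_div_cancel_right₀ _ h0]

lemma GG_tendsto (D : ℕ → ℕ → ℂ) (L : ℕ → ℂ) (h0 : L 0 ≠ 0)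
    (h : ∀ k, Tendsto (fun n => D n k) atTop (𝓝 (L k))) :
    ∀ j, Tendsto (fun n => GG (D n) j) atTop (𝓝 (GG L j)) := by
  intro j
  induction j using Nat.strong_induction_on with
  | _ j ih =>
    rw [show (fun n => GG (D n) j) = fun n =>
        (D n (j+1) - ∑ i ∈ Finset.range j, (j.choose i : ℂ) * (GG (D n) i * D n (j - i))) / D n 0
      from funext fun n => GG_def _ j, GG_def]
    exact ((h (j+1)).sub (tendsto_finset_sum _ (fun i hi =>
      tendsto_const_nhds.mul ((ih i (Finset.mem_range.mp hi)).mul (h (j - i)))))).div (h 0) h0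



lemma leibniz {s : Set ℂ} (hs : IsOpen s) {u v : ℂ → ℂ}
    (hu : AnalyticOnNhd ℂ u s) (hv : AnalyticOnNhd ℂ v s) :
    ∀ (n : ℕ), ∀ x ∈ s, iteratedDeriv n (fun z => u z * v z) x =
      ∑ i ∈ Finset.range (n+1), (n.choose i : ℂ) *
        (iteratedDeriv i u x * iteratedDeriv (n-i) v x) := by
  have hiu : ∀ m, AnalyticOnNhd ℂ (iteratedDeriv m u) s := fun m => by
    rw [iteratedDeriv_eq_iterate]; exact hu.iterated_deriv m
  have hiv : ∀ m, AnalyticOnNhd ℂ (iteratedDeriv m v) s := fun m => by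
    rw [iteratedDeriv_eq_iterate]; exact hv.iterated_deriv m
  intro n
  induction n with
  | zero => intro x hx; simp
  | succ n ih =>
    intro x hx
    have hA : ∀ m, HasDerivAt (iteratedDeriv m u) (iteratedDeriv (m+1) u x) x := by
      intro m
      rw [iteratedDeriv_succ]
      exact ((hiu m) x hx).differentiableAt.hasDerivAt
    have hB : ∀ m, HasDerivAt (iteratedDeriv m v) (iteratedDeriv (m+1) v x) x := by
      intro m
      rw [iteratedDeriv_succ]
      exact ((hiv m) x hx).differentiableAt.hasDerivAt
    have hev : iteratedDeriv n (fun z => u z * v z) =ᶠ[nhds x] fun y =>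
        ∑ i ∈ Finset.range (n+1), (n.choose i : ℂ) *
          (iteratedDeriv i u y * iteratedDeriv (n-i) v y) :=
      Filter.eventuallyEq_of_mem (hs.mem_nhds hx) ih
    have hd : HasDerivAt (fun y => ∑ i ∈ Finset.range (n+1), (n.choose i : ℂ) *
          (iteratedDeriv i u y * iteratedDeriv (n-i) v y))
        (∑ i ∈ Finset.range (n+1), (n.choose i : ℂ) *
          (iteratedDeriv (i+1) u x * iteratedDeriv (n-i) v x +
           iteratedDeriv i u x * iteratedDeriv (n-i+1) v x)) x := by
      exact HasDerivAt.fun_sum fun i _ => (((hA i).mul (hB (n-i)))).const_mul _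
    rw [iteratedDeriv_succ, hev.deriv_eq, hd.deriv]
    rw [Finset.sum_choose_succ_mul (fun i j => iteratedDeriv i u x * iteratedDeriv j v x) n]
    simp only [mul_add, Finset.sum_add_distrib]
    rw [add_comm]
    congr 1
    exact Finset.sum_congr rfl (fun i hi => by
      rw [Nat.succ_sub (Nat.lt_succ_iff.mp (Finset.mem_range.mp hi))])







lemma logDeriv_iteratedDeriv_eq_GG {s : Set ℂ} (hs : IsOpen s) (h0s : (0:ℂ) ∈ s) {H : ℂ → ℂ}
    (hH : AnalyticOnNhd ℂ H s) (hH0 : H 0 ≠ 0) (j : ℕ) :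
    iteratedDeriv j (logDeriv H) 0 = GG (fun k => iteratedDeriv k H 0) j := by
  classical
  set s' : Set ℂ := s ∩ H ⁻¹' {0}ᶜ with hs'def
  have hs' : IsOpen s' := hH.continuousOn.isOpen_inter_preimage hs isOpen_compl_singleton
  have h0s' : (0:ℂ) ∈ s' := ⟨h0s, by simpa using hH0⟩
  have hHs' : AnalyticOnNhd ℂ H s' := hH.mono Set.inter_subset_left
  have hld : AnalyticOnNhd ℂ (logDeriv H) s' := by
    have hd : AnalyticOnNhd ℂ (deriv H) s' := (hH.deriv).mono Set.inter_subset_left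
    have := hd.div hHs' (fun x hx => hx.2)
    exact this
  refine (GG_unique (fun k => iteratedDeriv k H 0) (fun i => iteratedDeriv i (logDeriv H) 0) (by simpa using hH0) ?_ j)
  intro m
  have hev : deriv H =ᶠ[nhds (0:ℂ)] fun z => logDeriv H z * H z := by
    refine Filter.eventuallyEq_of_mem (hs'.mem_nhds h0s') (fun x hx => ?_)
    simp only [logDeriv_apply]
    rw [div_mul_cancel₀ _ hx.2]
  calc iteratedDeriv (m+1) H 0 = iteratedDeriv m (deriv H) 0 := by rw [iteratedDeriv_succ']
    _ = iteratedDeriv m (fun z => logDeriv H z * H z) 0 := hev.iteratedDeriv_eq m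
    _ = _ := by
        rw [leibniz hs' hld hHs' m 0 h0s']



/-- derivative of sums over multisets -/
lemma hasDerivAt_msum (M : Multiset ℂ) (g : ℂ → ℂ → ℂ) (g' : ℂ → ℂ) (z : ℂ)
    (h : ∀ a ∈ M, HasDerivAt (g a) (g' a) z) :
    HasDerivAt (fun w => (M.map (fun a => g a w)).sum) ((M.map g').sum) z := by
  induction M using Multiset.induction with
  | empty => simpa using hasDerivAt_const z (0:ℂ)
  | cons a s ih =>
    simp only [Multiset.map_cons, Multiset.sum_cons]
    exact (h a (Multiset.mem_cons_self a s)).add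
      (ih fun b hb => h b (Multiset.mem_cons_of_mem hb))

/-- the basic term derivative -/
lemma hasDerivAt_term (n : ℕ) (a z : ℂ) (hz : z ≠ a) :
    HasDerivAt (fun w => (-1:ℂ)^n * (n.factorial : ℂ) * (w - a)^(-1 - (n:ℤ)))
      ((-1:ℂ)^(n+1) * ((n+1).factorial : ℂ) * (z - a)^(-1 - ((n+1:ℕ):ℤ))) z := by
  have h1 : HasDerivAt (fun w : ℂ => w - a) 1 z := (hasDerivAt_id z).sub_const a
  have h2 := (hasDerivAt_zpow (-1 - (n:ℤ)) (z - a) (Or.inl (sub_ne_zero.mpr hz))).comp z h1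
  simp only [Function.comp_def] at h2
  have h3 := h2.const_mul ((-1:ℂ)^n * (n.factorial : ℂ))
  have hval : (-1:ℂ)^(n+1) * (((n+1).factorial : ℕ) : ℂ) * (z - a)^(-1 - ((n+1:ℕ):ℤ))
      = ((-1:ℂ)^n * (n.factorial : ℂ)) * ((((-1 - (n:ℤ)) : ℤ) : ℂ) * (z - a)^((-1 - (n:ℤ)) - 1) * 1) := by
    rw [show ((-1 - (n:ℤ)) - 1) = (-1 - ((n+1:ℕ):ℤ)) by push_cast; ring, Nat.factorial_succ]
    push_cast
    ring
  rw [hval]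
  exact h3

lemma iter_msum (M : Multiset ℂ) (n : ℕ) : ∀ z : ℂ, (∀ a ∈ M, z ≠ a) →
    iteratedDeriv n (fun z => (M.map (fun a => (z - a)⁻¹)).sum) z
      = (M.map (fun a => (-1:ℂ)^n * (n.factorial : ℂ) * (z - a)^(-1 - (n:ℤ)))).sum := by
  induction n with
  | zero =>
    intro z hz
    rw [iteratedDeriv_zero]
    congr 1
    refine Multiset.map_congr rfl (fun a ha => ?_)
    simp [zpow_neg_one]
  | succ n ih =>
    intro z hz
    have hU : IsOpen {w : ℂ | ∀ a ∈ M, w ≠ a} := by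
      have : {w : ℂ | ∀ a ∈ M, w ≠ a} = (↑M.toFinset : Set ℂ)ᶜ := by
        ext w
        simp only [Set.mem_setOf_eq, Set.mem_compl_iff, Finset.coe_sort_coe, Finset.mem_coe,
          Multiset.mem_toFinset]
        exact ⟨fun h hw => h w hw rfl, fun h b hb he => h (he ▸ hb)⟩
      rw [this]
      exact (M.toFinset : Set ℂ).toFinite.isClosed.isOpen_compl
    have hev : iteratedDeriv n (fun z => (M.map (fun a => (z - a)⁻¹)).sum) =ᶠ[nhds z]
        fun w => (M.map (fun a => (-1:ℂ)^n * (n.factorial : ℂ) * (w - a)^(-1 - (n:ℤ)))).sum :=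
      Filter.eventuallyEq_of_mem (hU.mem_nhds hz) ih
    rw [iteratedDeriv_succ, hev.deriv_eq]
    exact (hasDerivAt_msum M _ _ z (fun a ha => hasDerivAt_term n a z (hz a ha))).deriv

lemma diff_msprod (M : Multiset ℂ) :
    Differentiable ℂ (fun z => (M.map (fun a => z - a)).prod) := by
  induction M using Multiset.induction with
  | empty => simpa using differentiable_const (1:ℂ)
  | cons a s ih =>
    simp only [Multiset.map_cons, Multiset.prod_cons]
    exact (differentiable_id.sub_const a).mul ih

lemma logDeriv_msprod (M : Multiset ℂ) : ∀ z : ℂ, (∀ a ∈ M, z ≠ a) →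
    logDeriv (fun z => (M.map (fun a => z - a)).prod) z = (M.map (fun a => (z - a)⁻¹)).sum := by
  induction M using Multiset.induction with
  | empty => intro z _; simp
  | cons a s ih =>
    intro z hz
    simp only [Multiset.map_cons, Multiset.prod_cons, Multiset.sum_cons]
    have hza : z - a ≠ 0 := sub_ne_zero.mpr (hz a (Multiset.mem_cons_self a s))
    have hprod : (s.map (fun b => z - b)).prod ≠ 0 := by
      intro h0
      rw [Multiset.prod_eq_zero_iff] at h0
      obtain ⟨b, hb, hb0⟩ := Multiset.mem_map.mp h0
      exact sub_ne_zero.mpr (hz b (Multiset.mem_cons_of_mem hb)) hb0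
    rw [logDeriv_mul (f := fun w : ℂ => w - a)
      (g := fun w => (Multiset.map (fun b => w - b) s).prod) z hza hprod
      ((differentiable_id.sub_const a) z) (diff_msprod s z)]
    congr 1
    · rw [logDeriv_apply]
      have : deriv (fun w : ℂ => w - a) z = 1 := by
        simpa using ((hasDerivAt_id z).sub_const a).deriv
      rw [this, one_div]
    · exact ih z (fun b hb => hz b (Multiset.mem_cons_of_mem hb))

lemma eval_eq_prod (f : Polynomial ℂ) (z : ℂ) :
    eval z f = f.leadingCoeff * ((f.roots.map (fun a => z - a)).prod) := by
  conv_lhs => rw [(IsAlgClosed.splits f).eq_prod_roots]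
  rw [eval_mul, eval_C, eval_multiset_prod, Multiset.map_map]
  exact congrArg _ (congrArg Multiset.prod (Multiset.map_congr rfl (fun a _ => by
    simp [Function.comp])))

lemma sPow_eq (f : Polynomial ℂ) (hf : f.eval 0 ≠ 0) (k : ℕ) (hk : 0 < k) :
    sPow k f = -(1/(((k-1).factorial : ℕ) : ℂ)) *
      iteratedDeriv (k-1) (logDeriv (fun z => eval z f)) 0 := by
  classical
  set M := f.roots with hM
  have hf0 : f ≠ 0 := fun h => hf (by simp [h])
  have hlead : f.leadingCoeff ≠ 0 := leadingCoeff_ne_zero.mpr hf0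
  have hroot0 : ∀ a ∈ M, a ≠ 0 := by
    intro a ha h0
    exact hf (by simpa [h0] using (Polynomial.isRoot_of_mem_roots ha))
  have hU : IsOpen {w : ℂ | ∀ a ∈ M, w ≠ a} := by
    have : {w : ℂ | ∀ a ∈ M, w ≠ a} = (↑M.toFinset : Set ℂ)ᶜ := by
      ext w
      simp only [Set.mem_setOf_eq, Set.mem_compl_iff, Finset.coe_sort_coe, Finset.mem_coe,
        Multiset.mem_toFinset]
      exact ⟨fun h hw => h w hw rfl, fun h b hb he => h (he ▸ hb)⟩
    rw [this]
    exact (M.toFinset : Set ℂ).toFinite.isClosed.isOpen_compl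
  have h0U : (0:ℂ) ∈ {w : ℂ | ∀ a ∈ M, w ≠ a} := fun a ha => (hroot0 a ha).symm
  have hevalfun : (fun z => eval z f) = fun z => f.leadingCoeff * ((M.map (fun a => z - a)).prod) :=
    funext fun z => eval_eq_prod f z
  have hld : ∀ w ∈ {w : ℂ | ∀ a ∈ M, w ≠ a},
      logDeriv (fun z => eval z f) w = (M.map (fun a => (w - a)⁻¹)).sum := by
    intro w hw
    rw [hevalfun, logDeriv_const_mul w _ hlead, logDeriv_msprod M w hw]
  have hev : logDeriv (fun z => eval z f) =ᶠ[nhds (0:ℂ)]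
      fun w => (M.map (fun a => (w - a)⁻¹)).sum :=
    Filter.eventuallyEq_of_mem (hU.mem_nhds h0U) hld
  rw [hev.iteratedDeriv_eq (k-1), iter_msum M (k-1) 0 h0U]
  rw [show (M.map (fun a => (-1:ℂ)^(k-1) * ((k-1).factorial : ℂ) * ((0:ℂ) - a)^(-1 - ((k-1:ℕ):ℤ)))).sum
      = (-(((k-1).factorial : ℕ) : ℂ)) * (M.map (fun a => (a⁻¹)^k)).sum from ?_]
  · rw [sPow]
    have : (((k-1).factorial : ℕ) : ℂ) ≠ 0 := Nat.cast_ne_zero.mpr (Nat.factorial_ne_zero _)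
    field_simp
    rfl
  · rw [← Multiset.sum_map_mul_left]
    congr 1
    refine Multiset.map_congr rfl (fun a ha => ?_)
    have ha0 : a ≠ 0 := hroot0 a ha
    have hcast : (-1 : ℤ) - ((k-1:ℕ):ℤ) = -(k:ℤ) := by
      have : (1:ℕ) ≤ k := hk
      push_cast [this]
      ring
    rw [hcast, zero_sub, zpow_neg, zpow_natCast, neg_pow a k, mul_inv, inv_pow]
    have hodd : Odd ((k-1) + k) := ⟨k-1, by omega⟩
    have hinv : ((-1:ℂ)^k)⁻¹ = (-1:ℂ)^k := by
      rw [← inv_pow, inv_neg, inv_one]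
    rw [hinv]
    rw [show (-1:ℂ)^(k-1) * ((k-1).factorial:ℂ) * ((-1:ℂ)^k * (a^k)⁻¹)
        = ((-1:ℂ)^((k-1)+k)) * (((k-1).factorial:ℂ) * (a⁻¹)^k) by rw [pow_add, inv_pow]; ring]
    rw [hodd.neg_one_pow]
    ring



lemma F_info (a : ℕ → ℂ) (F : ℂ → ℂ) (r : ℝ) (hr : 0 < r)
    (hF : ∀ z ∈ Metric.ball (0 : ℂ) r, HasSum (fun k => a k * z ^ k) (F z)) :
    AnalyticOnNhd ℂ F (Metric.ball (0 : ℂ) r) ∧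
      ∀ k : ℕ, iteratedDeriv k F 0 = (k.factorial : ℂ) * a k := by
  set p : FormalMultilinearSeries ℂ ℂ ℂ := FormalMultilinearSeries.ofScalars ℂ a with hp
  have hps : HasFPowerSeriesOnBall F p 0 (ENNReal.ofReal r) := by
    refine ⟨?_, by simp [hr], ?_⟩
    · -- radius
      apply ENNReal.le_of_forall_nnreal_lt
      intro t ht
      have htr : (t : ℝ) < r := by
        rw [ENNReal.lt_ofReal_iff_toReal_lt (by simp)] at ht
        simpa using ht
      have hz : ((t : ℝ) : ℂ) ∈ Metric.ball (0 : ℂ) r := by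
        simp only [Metric.mem_ball, dist_zero_right]
        rw [Complex.norm_real]
        simpa [abs_of_nonneg t.coe_nonneg] using htr
      have hs := (hF _ hz).summable.tendsto_atTop_zero
      have hs' : Tendsto (fun n => ‖p n‖ * (t : ℝ) ^ n) atTop (𝓝 0) := by
        have : (fun n => ‖p n‖ * (t : ℝ) ^ n)
            = fun n => ‖a n * ((t : ℝ) : ℂ) ^ n‖ := by
          funext n
          rw [FormalMultilinearSeries.ofScalars_norm, norm_mul, norm_pow, Complex.norm_real,
            Real.norm_eq_abs, abs_of_nonneg t.coe_nonneg]
        rw [this]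
        simpa using hs.norm
      exact p.le_radius_of_tendsto hs'
    · intro y hy
      rw [Metric.emetric_ball] at hy
      have h := hF y (by simpa using hy)
      have he : (fun n => p n fun _ => y) = fun n => a n * y ^ n := by
        funext n
        rw [hp, FormalMultilinearSeries.ofScalars_apply_eq, smul_eq_mul]
      rw [zero_add, he]
      exact h
  constructor
  · have := hps.analyticOnNhd
    rwa [Metric.emetric_ball] at this
  · intro k
    have h1 := hps.factorial_smul (1 : ℂ) k
    rw [iteratedDeriv_eq_iteratedFDeriv, ← h1]
    rw [hp, FormalMultilinearSeries.ofScalars_apply_eq]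
    simp [mul_comm]


lemma iteratedDeriv_polyEval : ∀ (p : Polynomial ℂ) (m : ℕ) (x : ℂ),
    iteratedDeriv m (fun z => eval z p) x = (Polynomial.derivative^[m] p).eval x := by
  intro p m
  induction m generalizing p with
  | zero => intro x; simp
  | succ m ih =>
    intro x
    rw [iteratedDeriv_succ']
    have hd : deriv (fun z => eval z p) = fun z => eval z (Polynomial.derivative p) := by
      funext z
      exact Polynomial.deriv (p := p) (x := z)
    rw [hd, ih (Polynomial.derivative p), Function.iterate_succ_apply]

end PfAux

/-- Proposition 2.1: for a weakly convergent sequence of polynomials not vanishing at 0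
with nonzero limit there, the power sums of inverse roots `s_k(f_n)` converge; if the
limit series represents an analytic function `F` near `0`, the limit of `s_k(f_n)` is
`-(1/(k-1)!) (F'/F)^{(k-1)}(0)`. -/
theorem statement2 (f : ℕ → Polynomial ℂ) (a : ℕ → ℂ)
    (h0 : ∀ n, (f n).eval 0 ≠ 0)
    (hlim : ∃ L : ℂ, L ≠ 0 ∧ Tendsto (fun n => (f n).eval 0) atTop (𝓝 L))
    (hweak : WeakConv f a) :
    (∀ k : ℕ, 0 < k → ∃ L : ℂ, Tendsto (fun n => sPow k (f n)) atTop (𝓝 L)) ∧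
    (∀ (F : ℂ → ℂ) (r : ℝ), 0 < r →
      (∀ z ∈ Metric.ball (0 : ℂ) r, HasSum (fun k => a k * z ^ k) (F z)) →
      ∀ k : ℕ, 0 < k →
        Tendsto (fun n => sPow k (f n)) atTop
          (𝓝 (-(1 / ((k - 1).factorial : ℂ)) *
            iteratedDeriv (k - 1) (fun z => deriv F z / F z) 0))) := by
  obtain ⟨L, hL0, hL⟩ := hlim
  set D : ℕ → ℕ → ℂ := fun n k => (Polynomial.derivative^[k] (f n)).eval 0 with hD
  set limD : ℕ → ℂ := fun k => (k.factorial : ℂ) * a k with hlimD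
  have hDk : ∀ k, Tendsto (fun n => D n k) atTop (𝓝 (limD k)) := hweak
  have ha0 : a 0 = L := by
    have h1 : Tendsto (fun n => D n 0) atTop (𝓝 (limD 0)) := hDk 0
    have h2 : (fun n => D n 0) = fun n => (f n).eval 0 := by
      funext n
      simp [hD]
    rw [h2] at h1
    have h3 := tendsto_nhds_unique h1 hL
    simpa [hlimD] using h3
  have hlimD0 : limD 0 ≠ 0 := by simpa [hlimD, ha0] using hL0
  have key : ∀ n (k : ℕ), 0 < k → sPow k (f n) =
      -(1/(((k-1).factorial : ℕ) : ℂ)) * PfAux.GG (D n) (k-1) := by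
    intro n k hk
    rw [PfAux.sPow_eq (f n) (h0 n) k hk]
    congr 1
    have hH : AnalyticOnNhd ℂ (fun z => eval z (f n)) Set.univ :=
      AnalyticOnNhd.eval_polynomial (𝕜 := ℂ) (f n)
    rw [PfAux.logDeriv_iteratedDeriv_eq_GG isOpen_univ (Set.mem_univ 0) hH (h0 n) (k-1)]
    congr 1
    funext m
    exact PfAux.iteratedDeriv_polyEval (f n) m 0
  have htend : ∀ (k : ℕ), 0 < k → Tendsto (fun n => sPow k (f n)) atTop
      (𝓝 (-(1/(((k-1).factorial : ℕ) : ℂ)) * PfAux.GG limD (k-1))) := by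
    intro k hk
    have h1 := PfAux.GG_tendsto D limD hlimD0 hDk (k-1)
    have h2 := h1.const_mul (-(1/(((k-1).factorial : ℕ) : ℂ)))
    have h3 : (fun n => sPow k (f n))
        = fun n => -(1/(((k-1).factorial : ℕ) : ℂ)) * PfAux.GG (D n) (k-1) :=
      funext fun n => key n k hk
    rw [h3]
    exact h2
  refine ⟨fun k hk => ⟨_, htend k hk⟩, ?_⟩
  intro F r hr hFsum k hk
  obtain ⟨hFan, hFit⟩ := PfAux.F_info a F r hr hFsum
  have hF0 : F 0 ≠ 0 := by
    have h1 := hFit 0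
    rw [iteratedDeriv_zero] at h1
    rw [h1]
    simpa [ha0] using hL0
  have hGG := PfAux.logDeriv_iteratedDeriv_eq_GG Metric.isOpen_ball
    (by simpa using hr) hFan hF0 (k-1)
  have hfun : (fun z => deriv F z / F z) = logDeriv F := by
    funext z
    exact (logDeriv_apply F z).symm
  have hDeq : (fun m => iteratedDeriv m F 0) = limD := funext hFit
  rw [hDeq] at hGG
  rw [hfun, hGG]
  exact htend k hk
end
end

section
/- For every positive integer N there exists a finite set Q of positive even integers with the following property: for any complex numbers z_1, …, z_N there is some q ∈ Q such that Re(z_j^q) ≥ 0 for all j = 1, …, N. -/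
noncomputable section
open Filter Polynomial Topology

lemma sign_mul_nonneg {a b : ℝ} (h : 0 ≤ a ↔ 0 ≤ b) : 0 ≤ a * b := by
  rcases le_or_gt 0 a with ha | ha
  · exact mul_nonneg ha (h.mp ha)
  · have hb : b < 0 := by by_contra hb; exact absurd (h.mpr (le_of_not_gt hb)) (not_le.mpr ha)
    exact le_of_lt (mul_pos_of_neg_of_neg ha hb)

lemma key_lemma (z : ℂ) (a b : ℕ) (hab : a < b)
    (h1 : (0 ≤ (z ^ (2*a)).re ↔ 0 ≤ (z ^ (2*b)).re))
    (h2 : (0 ≤ (z ^ (2*a)).im ↔ 0 ≤ (z ^ (2*b)).im)) :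
    0 ≤ (z ^ (2*(b-a))).re := by
  by_cases hz : z = 0
  · subst hz
    rw [zero_pow (by omega)]
    simp
  set w := z ^ (2*a) with hw
  set v := z ^ (2*b) with hv
  set r := Complex.normSq z with hr
  have hid : v * (starRingEnd ℂ) w = z ^ (2*(b-a)) * ((r:ℂ)) ^ (2*a) := by
    rw [hw, hv, map_pow, hr]
    have : z ^ (2*b) = z ^ (2*(b-a)) * z ^ (2*a) := by
      rw [← pow_add]; congr 1; omega
    rw [this, mul_assoc, ← mul_pow, Complex.mul_conj]
  have hre : (v * (starRingEnd ℂ) w).re = (z ^ (2*(b-a))).re * r ^ (2*a) := by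
    rw [hid]
    simp [Complex.mul_re, ← Complex.ofReal_pow]
  have hnn : 0 ≤ (v * (starRingEnd ℂ) w).re := by
    simp only [Complex.mul_re, Complex.conj_re, Complex.conj_im, mul_neg, sub_neg_eq_add]
    exact add_nonneg (sign_mul_nonneg h1.symm) (sign_mul_nonneg h2.symm)
  have hrpos : 0 < r ^ (2*a) := pow_pos (Complex.normSq_pos.mpr hz) _
  nlinarith [hre, hnn, hrpos]

/-- Proposition 2.6: for every `N` there is a finite set `Q` of positive even integers
such that any `N` complex numbers admit some `q ∈ Q` with all `q`-th powers in the
closed right half plane. -/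
theorem statement9 (N : ℕ) (hN : 0 < N) :
    ∃ Q : Finset ℕ, (∀ q ∈ Q, 0 < q ∧ Even q) ∧
      ∀ z : Fin N → ℂ, ∃ q ∈ Q, ∀ j, 0 ≤ ((z j) ^ q).re := by
  refine ⟨(Finset.Icc 1 (4^N)).image (fun k => 2*k), ?_, ?_⟩
  · intro q hq
    simp only [Finset.mem_image, Finset.mem_Icc] at hq
    obtain ⟨k, ⟨hk1, _⟩, rfl⟩ := hq
    exact ⟨by omega, ⟨k, by ring⟩⟩
  · intro z
    have hcard : Fintype.card (Fin N → Bool × Bool) < Fintype.card (Fin (4^N + 1)) := by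
      simp only [Fintype.card_fun, Fintype.card_prod, Fintype.card_bool, Fintype.card_fin]
      norm_num
    obtain ⟨m1, m2, hne, heq⟩ := Fintype.exists_ne_map_eq_of_card_lt
      (fun m : Fin (4^N+1) => fun j : Fin N =>
        ((decide (0 ≤ ((z j) ^ (2*(m:ℕ))).re)), (decide (0 ≤ ((z j) ^ (2*(m:ℕ))).im)))) hcard
    have heq' : ∀ j, (0 ≤ ((z j) ^ (2*(m1:ℕ))).re ↔ 0 ≤ ((z j) ^ (2*(m2:ℕ))).re) ∧
        (0 ≤ ((z j) ^ (2*(m1:ℕ))).im ↔ 0 ≤ ((z j) ^ (2*(m2:ℕ))).im) := by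
      intro j
      have := congrFun heq j
      rw [Prod.mk.injEq] at this
      constructor
      · exact decide_eq_decide.mp this.1
      · exact decide_eq_decide.mp this.2
    rcases Ne.lt_or_gt hne with hlt | hlt
    · have hlt' : (m1:ℕ) < (m2:ℕ) := hlt
      refine ⟨2*((m2:ℕ) - (m1:ℕ)), ?_, ?_⟩
      · simp only [Finset.mem_image, Finset.mem_Icc]
        exact ⟨(m2:ℕ) - (m1:ℕ), ⟨by omega, by have := m2.isLt; omega⟩, rfl⟩
      · intro j
        exact key_lemma (z j) m1 m2 hlt' (heq' j).1 (heq' j).2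
    · have hlt' : (m2:ℕ) < (m1:ℕ) := hlt
      refine ⟨2*((m1:ℕ) - (m2:ℕ)), ?_, ?_⟩
      · simp only [Finset.mem_image, Finset.mem_Icc]
        exact ⟨(m1:ℕ) - (m2:ℕ), ⟨by omega, by have := m1.isLt; omega⟩, rfl⟩
      · intro j
        exact key_lemma (z j) m2 m1 hlt' (heq' j).1.symm (heq' j).2.symm
end
end

section
/- If f is a polynomial with real coefficients, then for every nonnegative integer n, N(J(f,n); ℂ∖S_0) ≤ N(f; ℂ∖S_0), i.e. the number of zeros of the n-th Jensen polynomial of f lying outside the nonnegative real axis (counted with multiplicity) is at most the corresponding number for f. -/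
noncomputable section
open Filter Polynomial Topology

/-- nonneg real roots, with multiplicity -/
def mm (p : Polynomial ℝ) : Multiset ℝ := p.roots.filter (fun x => 0 ≤ x)

lemma mem_mm {p : Polynomial ℝ} {x : ℝ} (hp : p ≠ 0) :
    x ∈ mm p ↔ 0 ≤ x ∧ p.IsRoot x := by
  simp [mm, Multiset.mem_filter, mem_roots hp, and_comm]

lemma count_mm {p : Polynomial ℝ} {x : ℝ} (hx : 0 ≤ x) :
    (mm p).count x = p.rootMultiplicity x := by
  rw [mm, Multiset.count_filter, if_pos hx, count_roots]

lemma interleave_core (u h : Polynomial ℝ) (hu : u ≠ 0) (hh : h ≠ 0)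
    (hrolle : ∀ x y : ℝ, 0 ≤ x → x < y → u.IsRoot x → u.IsRoot y →
      ∃ z, x < z ∧ z < y ∧ h.IsRoot z) :
    (mm u).toFinset.card ≤ ((mm h).toFinset \ (mm u).toFinset).card + 1 := by
  refine Finset.card_le_diff_of_interleaved fun x hx y hy hxy _ => ?_
  rw [Multiset.mem_toFinset, mem_mm hu] at hx hy
  obtain ⟨z, hz1, hz2, hz3⟩ := hrolle x y hx.1 hxy hx.2 hy.2
  exact ⟨z, Multiset.mem_toFinset.2 ((mem_mm hh).2 ⟨hx.1.trans hz1.le, hz3⟩), hz1, hz2⟩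

lemma card_mm_le (u h : Polynomial ℝ) (hh : h ≠ 0)
    (hmult : ∀ x : ℝ, 0 ≤ x → u.rootMultiplicity x ≤ h.rootMultiplicity x + 1)
    {c : ℕ}
    (hcard : (mm u).toFinset.card ≤ ((mm h).toFinset \ (mm u).toFinset).card + c) :
    Multiset.card (mm u) ≤ Multiset.card (mm h) + c := by
  classical
  calc
    Multiset.card (mm u) = ∑ x ∈ (mm u).toFinset, (mm u).count x :=
      (Multiset.toFinset_sum_count_eq _).symm
    _ = ∑ x ∈ (mm u).toFinset, ((mm u).count x - 1 + 1) :=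
      (Eq.symm <| Finset.sum_congr rfl fun _ hx => tsub_add_cancel_of_le <|
        Nat.succ_le_iff.2 <| Multiset.count_pos.2 <| Multiset.mem_toFinset.1 hx)
    _ = (∑ x ∈ (mm u).toFinset, ((mm u).count x - 1)) + (mm u).toFinset.card := by
      simp only [Finset.sum_add_distrib, Finset.card_eq_sum_ones]
    _ ≤ (∑ x ∈ (mm u).toFinset, (mm h).count x) +
          (((mm h).toFinset \ (mm u).toFinset).card + c) := by
      refine add_le_add (Finset.sum_le_sum fun x hx => ?_) hcard
      have hx0 : (0:ℝ) ≤ x := by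
        have := Multiset.mem_toFinset.1 hx
        simp only [mm, Multiset.mem_filter] at this
        exact this.2
      rw [count_mm hx0, count_mm hx0]
      have := hmult x hx0
      omega
    _ ≤ (∑ x ∈ (mm u).toFinset, (mm h).count x) +
          ((∑ x ∈ (mm h).toFinset \ (mm u).toFinset, (mm h).count x) + c) := by
      refine add_le_add_right (add_le_add_left ((Finset.card_eq_sum_ones _).trans_le ?_) _) _
      refine Finset.sum_le_sum fun x hx => Nat.succ_le_iff.2 <| ?_
      rw [Multiset.count_pos, ← Multiset.mem_toFinset]
      exact (Finset.mem_sdiff.1 hx).1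
    _ = Multiset.card (mm h) + c := by
      rw [← add_assoc, ← Finset.sum_union Finset.disjoint_sdiff,
        Finset.union_sdiff_self_eq_union, ← Multiset.toFinset_sum_count_eq,
        ← Finset.sum_subset Finset.subset_union_right]
      intro x _ hx₂
      simpa only [Multiset.mem_toFinset, Multiset.count_eq_zero] using hx₂

lemma tendsto_exp_mul_eval (p : Polynomial ℝ) {r : ℝ} (hr : 0 < r) :
    Tendsto (fun w : ℝ => Real.exp (-r * w) * p.eval w) atTop (nhds 0) := by
  have hbase : ∀ i : ℕ, Tendsto (fun w : ℝ => w ^ i * Real.exp (-(r * w))) atTop (nhds 0) := by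
    intro i
    have h1 : Tendsto (fun w : ℝ => r * w) atTop atTop :=
      Tendsto.const_mul_atTop hr tendsto_id
    have h2 := (Real.tendsto_pow_mul_exp_neg_atTop_nhds_zero i).comp h1
    have h3 : Tendsto (fun w : ℝ => (r * w) ^ i * Real.exp (-(r * w))) atTop (nhds 0) := h2
    have h4 := h3.const_mul ((r ^ i)⁻¹)
    rw [mul_zero] at h4
    refine h4.congr fun w => ?_
    field_simp [mul_pow]
    ring
  have : Tendsto (fun w : ℝ => ∑ i ∈ Finset.range (p.natDegree + 1),
      p.coeff i * (w ^ i * Real.exp (-(r * w)))) atTop (nhds 0) := by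
    have := tendsto_finset_sum (Finset.range (p.natDegree + 1))
      (fun i _ => ((hbase i).const_mul (p.coeff i)))
    simpa using this
  refine this.congr fun w => ?_
  rw [eval_eq_sum_range]
  rw [Finset.mul_sum]
  refine Finset.sum_congr rfl fun i _ => by ring_nf

lemma hasDerivAt_exp_eval (u : Polynomial ℝ) (r : ℝ) (w : ℝ) :
    HasDerivAt (fun x : ℝ => Real.exp (-r * x) * u.eval x)
      (Real.exp (-r * w) * ((derivative u - Polynomial.C r * u).eval w)) w := by
  have h1 : HasDerivAt (fun x : ℝ => -r * x) (-r) w := by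
    simpa using (hasDerivAt_id w).const_mul (-r)
  have h2 : HasDerivAt (fun x : ℝ => Real.exp (-r * x)) (Real.exp (-r * w) * (-r)) w :=
    (Real.hasDerivAt_exp _).comp w h1
  have h3 : HasDerivAt (fun x : ℝ => u.eval x) ((derivative u).eval w) w := u.hasDerivAt w
  have h4 : HasDerivAt (fun x : ℝ => Real.exp (-r * x) * u.eval x) _ w := h2.mul h3
  convert h4 using 1
  simp [eval_sub, eval_mul]
  ring

lemma R0 (u : Polynomial ℝ) (hu : u ≠ 0) :
    Multiset.card (mm u) ≤ Multiset.card (mm (derivative u)) + 1 := by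
  rcases eq_or_ne (derivative u) 0 with hd | hd
  · rw [eq_C_of_derivative_eq_zero hd]
    simp [mm, roots_C]
  refine card_mm_le u (derivative u) hd (fun x _ => ?_) (interleave_core u (derivative u) hu hd ?_)
  · have := u.rootMultiplicity_sub_one_le_derivative_rootMultiplicity x
    omega
  · intro x y _ hxy hx hy
    obtain ⟨z, hz1, hz2⟩ := exists_deriv_eq_zero hxy u.continuousOn (hx.trans hy.symm)
    exact ⟨z, hz1.1, hz1.2, by rwa [IsRoot, ← u.deriv]⟩

lemma R1_ne (u : Polynomial ℝ) (hu : u ≠ 0) {r : ℝ} (hr : 0 < r) :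
    derivative u - Polynomial.C r * u ≠ 0 := by
  intro hzero
  have hd0 : (derivative u).coeff u.natDegree = 0 :=
    coeff_eq_zero_of_degree_lt ((degree_derivative_lt hu).trans_le degree_le_natDegree)
  have hc : (derivative u - Polynomial.C r * u).coeff u.natDegree = -(r * u.leadingCoeff) := by
    rw [coeff_sub, hd0, coeff_C_mul]
    rw [leadingCoeff]
    ring
  rw [hzero, coeff_zero] at hc
  have h1 := leadingCoeff_ne_zero.2 hu
  exact (mul_ne_zero hr.ne' h1) (by linarith)

lemma rolle_step (u : Polynomial ℝ) (r : ℝ) {x y : ℝ} (hxy : x < y)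
    (hx : u.IsRoot x) (hy : u.IsRoot y) :
    ∃ z, x < z ∧ z < y ∧ (derivative u - Polynomial.C r * u).IsRoot z := by
  have hcont : ContinuousOn (fun w : ℝ => Real.exp (-r * w) * u.eval w) (Set.Icc x y) :=
    (Continuous.mul (by continuity) u.continuous_aeval).continuousOn
  have hI : (fun w : ℝ => Real.exp (-r * w) * u.eval w) x
      = (fun w : ℝ => Real.exp (-r * w) * u.eval w) y := by
    simp only []
    rw [hx.eq_zero, hy.eq_zero, mul_zero, mul_zero]
  obtain ⟨c, hc, hc0⟩ := exists_hasDerivAt_eq_zero hxy hcont hI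
    (fun w _ => hasDerivAt_exp_eval u r w)
  refine ⟨c, hc.1, hc.2, ?_⟩
  have hexp : Real.exp (-r * c) ≠ 0 := (Real.exp_pos _).ne'
  have := mul_eq_zero.1 hc0
  rcases this with h1 | h2
  · exact absurd h1 hexp
  · exact h2

lemma mono_contra (u : Polynomial ℝ) {r : ℝ} (hr : 0 < r) (x : ℝ)
    (hroot : u.eval x = 0)
    (hpos : ∀ z, x < z → 0 < (derivative u - Polynomial.C r * u).eval z) : False := by
  set f := fun w : ℝ => Real.exp (-r * w) * u.eval w with hf
  have hmono : StrictMonoOn f (Set.Ici x) := by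
    refine strictMonoOn_of_deriv_pos (convex_Ici x)
      ((Continuous.mul (by continuity) u.continuous_aeval).continuousOn) ?_
    intro w hw
    rw [interior_Ici] at hw
    rw [(hasDerivAt_exp_eval u r w).deriv]
    exact mul_pos (Real.exp_pos _) (hpos w hw)
  have hfx : f x = 0 := by simp [hf, hroot]
  have hfy : 0 < f (x + 1) := by
    have := hmono (Set.self_mem_Ici) (Set.mem_Ici.2 (by linarith : x ≤ x + 1)) (by linarith)
    rwa [hfx] at this
  have htend := tendsto_exp_mul_eval u hr
  have hev : ∀ᶠ w in atTop, f w < f (x + 1) := htend.eventually_lt_const hfy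
  obtain ⟨w, hw1, hw2⟩ := (hev.and (eventually_ge_atTop (x + 2))).exists
  have : f (x + 1) < f w :=
    hmono (Set.mem_Ici.2 (by linarith)) (Set.mem_Ici.2 (by linarith)) (by linarith)
  linarith

lemma tail_root (u : Polynomial ℝ) (hu : u ≠ 0) {r : ℝ} (hr : 0 < r) {x : ℝ}
    (hroot : u.IsRoot x) :
    ∃ z, x < z ∧ (derivative u - Polynomial.C r * u).IsRoot z := by
  by_contra hne
  push_neg at hne
  set h := derivative u - Polynomial.C r * u with hdef
  have hnz : ∀ z, x < z → h.eval z ≠ 0 := fun z hz => hne z hz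
  have hdich : (∀ z, x < z → 0 < h.eval z) ∨ (∀ z, x < z → h.eval z < 0) := by
    by_cases hplus : ∀ z, x < z → 0 < h.eval z
    · exact Or.inl hplus
    · push_neg at hplus
      obtain ⟨z0, hz0, hz0'⟩ := hplus
      have hz0neg : h.eval z0 < 0 := lt_of_le_of_ne hz0' (hnz z0 hz0)
      refine Or.inr fun z hz => ?_
      by_contra hge
      push_neg at hge
      have hzpos : 0 < h.eval z := lt_of_le_of_ne hge (Ne.symm (hnz z hz))
      have hcont : ContinuousOn (fun w => h.eval w) (Set.uIcc z0 z) :=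
        h.continuous_aeval.continuousOn
      have h0mem : (0:ℝ) ∈ Set.uIcc (h.eval z0) (h.eval z) :=
        Set.mem_uIcc.2 (Or.inl ⟨hz0neg.le, hzpos.le⟩)
      obtain ⟨c, hc, hc0⟩ := intermediate_value_uIcc hcont h0mem
      have hcx : x < c := by
        rcases Set.mem_uIcc.1 hc with ⟨h1, _⟩ | ⟨h1, _⟩
        · exact lt_of_lt_of_le hz0 h1
        · exact lt_of_lt_of_le hz h1
      exact hnz c hcx hc0
  rcases hdich with hpos | hneg
  · exact mono_contra u hr x hroot hpos
  · refine mono_contra (-u) hr x (by simp [hroot.eq_zero]) fun z hz => ?_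
    have h2 := hneg z hz
    have heq : derivative (-u) - Polynomial.C r * (-u)
        = -(derivative u - Polynomial.C r * u) := by
      rw [derivative_neg]; ring
    rw [heq, eval_neg]
    simp only [hdef] at h2
    linarith

lemma R1 (u : Polynomial ℝ) (hu : u ≠ 0) {r : ℝ} (hr : 0 < r) :
    Multiset.card (mm u) ≤ Multiset.card (mm (derivative u - Polynomial.C r * u)) := by
  classical
  set h := derivative u - Polynomial.C r * u with hdef
  have hh : h ≠ 0 := R1_ne u hu hr
  have hmult : ∀ x : ℝ, 0 ≤ x → u.rootMultiplicity x ≤ h.rootMultiplicity x + 1 := by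
    intro x _
    rcases Nat.eq_zero_or_pos (u.rootMultiplicity x) with h0 | hpos
    · omega
    have hdvd1 : (X - Polynomial.C x) ^ (u.rootMultiplicity x - 1) ∣ u :=
      dvd_trans (pow_dvd_pow _ (Nat.sub_le _ _)) (u.pow_rootMultiplicity_dvd x)
    have hdvd2 : (X - Polynomial.C x) ^ (u.rootMultiplicity x - 1) ∣ derivative u := by
      refine dvd_trans (pow_dvd_pow _ ?_) ((derivative u).pow_rootMultiplicity_dvd x)
      have := u.rootMultiplicity_sub_one_le_derivative_rootMultiplicity x
      omega
    have hdvd : (X - Polynomial.C x) ^ (u.rootMultiplicity x - 1) ∣ h :=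
      dvd_sub hdvd2 (hdvd1.mul_left _)
    have := (le_rootMultiplicity_iff hh).2 hdvd
    omega
  rcases eq_or_ne (mm u) 0 with hmm | hmm
  · simp [hmm]
  have hsne : (mm u).toFinset.Nonempty := by
    obtain ⟨a, ha⟩ := Multiset.exists_mem_of_ne_zero hmm
    exact ⟨a, Multiset.mem_toFinset.2 ha⟩
  set s := (mm u).toFinset
  set x₀ := s.max' hsne with hx₀
  have hx₀mem : x₀ ∈ mm u := Multiset.mem_toFinset.1 (s.max'_mem hsne)
  have hx₀' := (mem_mm hu).1 hx₀mem
  obtain ⟨z, hzx, hzr⟩ := tail_root u hu hr hx₀'.2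
  have hz0 : (0:ℝ) ≤ z := hx₀'.1.trans hzx.le
  have hzt : z ∈ (mm h).toFinset := Multiset.mem_toFinset.2 ((mem_mm hh).2 ⟨hz0, hzr⟩)
  have hzs : z ∉ s := by
    intro hzs
    exact absurd (s.le_max' z hzs) (not_le.2 hzx)
  have step1 : s.card ≤ (((mm h).toFinset.erase z) \ s).card + 1 := by
    refine Finset.card_le_diff_of_interleaved fun a ha b hb hab _ => ?_
    have ha' := (mem_mm hu).1 (Multiset.mem_toFinset.1 ha)
    have hb' := (mem_mm hu).1 (Multiset.mem_toFinset.1 hb)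
    obtain ⟨w, hw1, hw2, hw3⟩ := rolle_step u r hab ha'.2 hb'.2
    have hwz : w ≠ z := by
      have hbx₀ : b ≤ x₀ := s.le_max' b hb
      have : w < z := lt_of_lt_of_le hw2 (hbx₀.trans hzx.le)
      exact this.ne
    refine ⟨w, Finset.mem_erase.2 ⟨hwz, Multiset.mem_toFinset.2 ((mem_mm hh).2
      ⟨ha'.1.trans hw1.le, hw3⟩)⟩, hw1, hw2⟩
  have step2 : (((mm h).toFinset.erase z) \ s).card + 1 ≤ ((mm h).toFinset \ s).card := by
    have hzmem : z ∈ (mm h).toFinset \ s := Finset.mem_sdiff.2 ⟨hzt, hzs⟩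
    have hznot : z ∉ ((mm h).toFinset.erase z) \ s := by
      intro hzz
      exact (Finset.mem_erase.1 (Finset.mem_sdiff.1 hzz).1).1 rfl
    have hsub : insert z (((mm h).toFinset.erase z) \ s) ⊆ (mm h).toFinset \ s := by
      intro a ha
      rcases Finset.mem_insert.1 ha with rfl | ha
      · exact hzmem
      · obtain ⟨ha1, ha2⟩ := Finset.mem_sdiff.1 ha
        exact Finset.mem_sdiff.2 ⟨(Finset.mem_erase.1 ha1).2, ha2⟩
    calc (((mm h).toFinset.erase z) \ s).card + 1
        = (insert z (((mm h).toFinset.erase z) \ s)).card :=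
          (Finset.card_insert_of_notMem hznot).symm
      _ ≤ ((mm h).toFinset \ s).card := Finset.card_le_card hsub
  have hcard : s.card ≤ ((mm h).toFinset \ s).card + 0 := by omega
  simpa using card_mm_le u h hh hmult hcard

lemma appell_coeff (a : ℕ → ℝ) (n j : ℕ) (hj : j ≤ n) :
    (appellR a n).coeff j = (n.factorial : ℝ) / (j.factorial : ℝ) * a (n - j) := by
  rw [appellR, finset_sum_coeff]
  rw [Finset.sum_eq_single (n - j)]
  · rw [coeff_C_mul, coeff_X_pow, if_pos (by omega : j = n - (n - j))]
    rw [(by omega : n - (n - j) = j)]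
    ring
  · intro k hk hkj
    rw [coeff_C_mul, coeff_X_pow, if_neg (by simp at hk; omega)]
    ring
  · intro hmem
    simp at hmem

lemma appell_coeff_gt (a : ℕ → ℝ) (n j : ℕ) (hj : n < j) :
    (appellR a n).coeff j = 0 := by
  rw [appellR, finset_sum_coeff]
  refine Finset.sum_eq_zero fun k hk => ?_
  simp only [Finset.mem_range] at hk
  rw [coeff_C_mul, coeff_X_pow, if_neg (by omega)]
  ring

lemma jensen_coeff (a : ℕ → ℝ) (n j : ℕ) :
    (jensenR a n).coeff j =
      if j ≤ n then (n.factorial : ℝ) / ((n - j).factorial : ℝ) * a j else 0 := by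
  rw [jensenR, finset_sum_coeff]
  split_ifs with hj
  · rw [Finset.sum_eq_single j]
    · rw [coeff_C_mul, coeff_X_pow, if_pos rfl]; ring
    · intro k _ hkj
      rw [coeff_C_mul, coeff_X_pow, if_neg (fun h => hkj h.symm)]; ring
    · intro hmem; simp at hmem; omega
  · refine Finset.sum_eq_zero fun k hk => ?_
    simp only [Finset.mem_range] at hk
    rw [coeff_C_mul, coeff_X_pow, if_neg (by omega)]; ring

lemma jensen_eq_reflect (a : ℕ → ℝ) (n : ℕ) :
    jensenR a n = Polynomial.reflect n (appellR a n) := by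
  ext j
  rw [coeff_reflect, jensen_coeff]
  rcases le_or_gt j n with hj | hj
  · rw [if_pos hj, revAt_le hj, appell_coeff a n (n - j) (by omega)]
    congr 2
    omega
  · rw [if_neg (by omega), revAt_eq_self_of_lt hj, appell_coeff_gt a n j hj]

lemma appell_sub (a b : ℕ → ℝ) (n : ℕ) :
    appellR (fun k => a k - b k) n = appellR a n - appellR b n := by
  ext j
  rw [coeff_sub]
  rcases le_or_gt j n with hj | hj
  · rw [appell_coeff _ n j hj, appell_coeff _ n j hj, appell_coeff _ n j hj]
    ring
  · rw [appell_coeff_gt _ n j hj, appell_coeff_gt _ n j hj, appell_coeff_gt _ n j hj]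
    ring

lemma appell_smul (c : ℝ) (a : ℕ → ℝ) (n : ℕ) :
    appellR (fun k => c * a k) n = Polynomial.C c * appellR a n := by
  ext j
  rw [coeff_C_mul]
  rcases le_or_gt j n with hj | hj
  · rw [appell_coeff _ n j hj, appell_coeff _ n j hj]
    ring
  · rw [appell_coeff_gt _ n j hj, appell_coeff_gt _ n j hj]
    ring

lemma appell_X_mul (u : Polynomial ℝ) (n : ℕ) :
    appellR (fun k => (X * u).coeff k) n = derivative (appellR u.coeff n) := by
  ext j
  rw [coeff_derivative]
  rcases le_or_gt j n with hj | hj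
  · rw [appell_coeff _ n j hj]
    rcases lt_or_eq_of_le hj with hjn | hje
    · rw [appell_coeff _ n (j + 1) (by omega)]
      obtain ⟨m, hm⟩ : ∃ m, n - j = m + 1 := ⟨n - j - 1, by omega⟩
      rw [hm, coeff_X_mul, (by omega : n - (j + 1) = m)]
      have h2 : ((j+1 : ℕ) : ℝ) ≠ 0 := Nat.cast_ne_zero.2 (by omega)
      have h3 : (Nat.factorial (j+1) : ℝ) = (j+1 : ℕ) * (j.factorial : ℝ) := by
        rw [Nat.factorial_succ]; push_cast; ring
      rw [h3]
      have h4 : ((j.factorial : ℝ)) ≠ 0 := Nat.cast_ne_zero.2 (Nat.factorial_ne_zero j)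
      field_simp
      push_cast
      ring
    · subst hje
      rw [appell_coeff_gt _ _ _ (by omega : j < j + 1), Nat.sub_self, mul_coeff_zero,
        coeff_X_zero]
      ring
  · rw [appell_coeff_gt _ n j hj, appell_coeff_gt _ n (j + 1) (by omega)]
    ring

lemma appell_step (u : Polynomial ℝ) (r : ℝ) (n : ℕ) :
    appellR (fun k => ((X - Polynomial.C r) * u).coeff k) n
      = derivative (appellR u.coeff n) - Polynomial.C r * appellR u.coeff n := by
  have h1 : (fun k => ((X - Polynomial.C r) * u).coeff k)
      = fun k => (X * u).coeff k - r * u.coeff k := by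
    funext k
    rw [sub_mul, coeff_sub, coeff_C_mul]
  rw [h1, appell_sub, appell_smul, appell_X_mul]

lemma natDegree_appell_le (a : ℕ → ℝ) (n : ℕ) : (appellR a n).natDegree ≤ n := by
  refine natDegree_le_iff_coeff_eq_zero.2 fun N hN => appell_coeff_gt a n N hN

open scoped Classical in
lemma NPoly_compl (g : Polynomial ℂ) :
    NPoly g S0ᶜ + Multiset.card (g.roots.filter (fun z => z ∈ S0)) =
      Multiset.card g.roots := by
  rw [NPoly, ← Multiset.countP_eq_card_filter, ← Multiset.countP_eq_card_filter]
  induction g.roots using Multiset.induction_on with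
  | empty => simp
  | cons a s ih =>
    by_cases ha : a ∈ S0 <;>
      simp [Multiset.countP_cons, ha, ← ih] <;> omega

lemma ofReal_mem_S0 {x : ℝ} (hx : 0 ≤ x) : (x : ℂ) ∈ S0 := by
  constructor <;> simp [hx]

lemma mem_S0_iff {z : ℂ} : z ∈ S0 ↔ ∃ x : ℝ, 0 ≤ x ∧ z = (x : ℂ) := by
  constructor
  · rintro ⟨h1, h2⟩
    exact ⟨z.re, h2, (Complex.ext (by simp) (by simp [h1])).symm⟩
  · rintro ⟨x, hx, rfl⟩
    exact ofReal_mem_S0 hx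

lemma map_ne (f : Polynomial ℝ) (hf : f ≠ 0) : f.map (algebraMap ℝ ℂ) ≠ 0 :=
  (Polynomial.map_ne_zero_iff (algebraMap ℝ ℂ).injective).2 hf

open scoped Classical in
lemma filter_S0_of_no_nonneg_roots (f : Polynomial ℝ) (hf : f ≠ 0) (h0 : mm f = 0) :
    (f.map (algebraMap ℝ ℂ)).roots.filter (fun z => z ∈ S0) = 0 := by
  rw [Multiset.filter_eq_nil]
  intro z hz hzS0
  obtain ⟨x, hx0, rfl⟩ := mem_S0_iff.1 hzS0
  have hroot : (f.map (algebraMap ℝ ℂ)).IsRoot (x : ℂ) :=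
    isRoot_of_mem_roots hz
  have : f.eval x = 0 := by
    have h2 : Polynomial.eval₂ (algebraMap ℝ ℂ) ((algebraMap ℝ ℂ) x) f = 0 := by
      rwa [IsRoot, Polynomial.eval_map] at hroot
    rw [Polynomial.eval₂_at_apply] at h2
    have h3 : ((f.eval x : ℝ) : ℂ) = 0 := h2
    exact_mod_cast h3
  have : x ∈ mm f := (mem_mm hf).2 ⟨hx0, this⟩
  rw [h0] at this
  simp at this

open scoped Classical in
lemma NPolyR_of_no_nonneg_roots (f : Polynomial ℝ) (hf : f ≠ 0) (h0 : mm f = 0) :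
    NPolyR f S0ᶜ = f.natDegree := by
  have h1 := NPoly_compl (f.map (algebraMap ℝ ℂ))
  rw [filter_S0_of_no_nonneg_roots f hf h0] at h1
  simp only [Multiset.card_zero, add_zero] at h1
  rw [NPolyR, h1, IsAlgClosed.card_roots_map_eq_natDegree_of_injective f (algebraMap ℝ ℂ).injective]

open scoped Classical in
lemma NPolyR_mul_root (u : Polynomial ℝ) (hu : u ≠ 0) {r : ℝ} (hr : 0 ≤ r) :
    NPolyR ((X - Polynomial.C r) * u) S0ᶜ = NPolyR u S0ᶜ := by
  rw [NPolyR, NPolyR, NPoly, NPoly, Polynomial.map_mul, Polynomial.map_sub, map_X, map_C]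
  rw [Polynomial.roots_mul (mul_ne_zero (X_sub_C_ne_zero _) (map_ne u hu))]
  rw [roots_X_sub_C, Multiset.filter_add]
  have : (algebraMap ℝ ℂ) r ∈ S0 := by
    have : ((r : ℂ)) ∈ S0 := ofReal_mem_S0 hr
    simpa using this
  rw [Multiset.filter_singleton, if_neg (by simpa using this)]
  simp

open scoped Classical in
lemma card_mm_le_filter_S0 (f : Polynomial ℝ) (hf : f ≠ 0) :
    Multiset.card (mm f) ≤
      Multiset.card ((f.map (algebraMap ℝ ℂ)).roots.filter (fun z => z ∈ S0)) := by
  have h1 : (mm f).map (fun x : ℝ => (x : ℂ)) ≤ (f.map (algebraMap ℝ ℂ)).roots := by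
    refine le_trans (Multiset.map_le_map (Multiset.filter_le _ _)) ?_
    have := Polynomial.map_roots_le (map_ne f hf)
    convert this using 2
    rfl
  have h2 : (mm f).map (fun x : ℝ => (x : ℂ))
      = ((mm f).map (fun x : ℝ => (x : ℂ))).filter (fun z => z ∈ S0) := by
    rw [eq_comm, Multiset.filter_eq_self]
    intro z hz
    obtain ⟨x, hx, rfl⟩ := Multiset.mem_map.1 hz
    have hx0 : 0 ≤ x := by
      simp only [mm, Multiset.mem_filter] at hx
      exact hx.2
    exact ofReal_mem_S0 hx0
  calc Multiset.card (mm f) = Multiset.card ((mm f).map (fun x : ℝ => (x : ℂ))) :=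
        (Multiset.card_map _ _).symm
    _ = Multiset.card (((mm f).map (fun x : ℝ => (x : ℂ))).filter (fun z => z ∈ S0)) := by
        rw [← h2]
    _ ≤ _ := Multiset.card_le_card (Multiset.filter_le_filter _ h1)

lemma R1_deg (u : Polynomial ℝ) (hu : u ≠ 0) {r : ℝ} (hr : 0 < r) :
    (derivative u - Polynomial.C r * u).natDegree = u.natDegree := by
  refine le_antisymm ?_ ?_
  · refine (natDegree_sub_le _ _).trans ?_
    simp only [max_le_iff]
    constructor
    · exact (natDegree_derivative_le u).trans (Nat.sub_le _ _)
    · exact (natDegree_C_mul_le _ _)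
  · refine le_natDegree_of_ne_zero ?_
    have hd0 : (derivative u).coeff u.natDegree = 0 :=
      coeff_eq_zero_of_degree_lt ((degree_derivative_lt hu).trans_le degree_le_natDegree)
    rw [coeff_sub, hd0, coeff_C_mul, zero_sub, neg_ne_zero]
    exact mul_ne_zero hr.ne' (leadingCoeff_ne_zero.2 hu)

lemma base_bound (n : ℕ) (f : Polynomial ℝ) (hf : f ≠ 0) (h0 : mm f = 0) :
    (appellR f.coeff n).natDegree - Multiset.card (mm (appellR f.coeff n))
      ≤ NPolyR f S0ᶜ := by
  rw [NPolyR_of_no_nonneg_roots f hf h0]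
  rcases eq_or_ne (appellR f.coeff n) 0 with hA | hA
  · rw [hA]
    simp
  rcases le_or_gt n f.natDegree with hnd | hnd
  · have := natDegree_appell_le f.coeff n
    omega
  · have hdvd : (X : Polynomial ℝ) ^ (n - f.natDegree) ∣ appellR f.coeff n := by
      rw [Polynomial.X_pow_dvd_iff]
      intro j hj
      rw [appell_coeff f.coeff n j (by omega),
        Polynomial.coeff_eq_zero_of_natDegree_lt (by omega)]
      ring
    have hmult : n - f.natDegree ≤ (appellR f.coeff n).rootMultiplicity 0 := by
      refine (le_rootMultiplicity_iff hA).2 ?_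
      simpa using hdvd
    have h1 : (mm (appellR f.coeff n)).count 0 = (appellR f.coeff n).rootMultiplicity 0 :=
      count_mm le_rfl
    have h2 := Multiset.count_le_card (0:ℝ) (mm (appellR f.coeff n))
    have := natDegree_appell_le f.coeff n
    omega

lemma mainR (n : ℕ) : ∀ (d : ℕ) (f : Polynomial ℝ), f ≠ 0 → f.natDegree ≤ d →
    (appellR f.coeff n).natDegree - Multiset.card (mm (appellR f.coeff n))
      ≤ NPolyR f S0ᶜ := by
  intro d
  induction d with
  | zero =>
    intro f hf hdeg
    rcases eq_or_ne (mm f) 0 with h0 | h0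
    · exact base_bound n f hf h0
    · exfalso
      obtain ⟨r, hr⟩ := Multiset.exists_mem_of_ne_zero h0
      have hr' := (mem_mm hf).1 hr
      set u := f /ₘ (X - Polynomial.C r) with hudef
      have hfu : (X - Polynomial.C r) * u = f := mul_divByMonic_eq_iff_isRoot.2 hr'.2
      have hu : u ≠ 0 := fun h => hf (by rw [← hfu, h, mul_zero])
      have : f.natDegree = u.natDegree + 1 := by
        rw [← hfu, natDegree_mul (X_sub_C_ne_zero r) hu, natDegree_X_sub_C]
        ring
      omega
  | succ d ih =>
    intro f hf hdeg
    rcases eq_or_ne (mm f) 0 with h0 | h0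
    · exact base_bound n f hf h0
    obtain ⟨r, hr⟩ := Multiset.exists_mem_of_ne_zero h0
    have hr' := (mem_mm hf).1 hr
    set u := f /ₘ (X - Polynomial.C r) with hudef
    have hfu : (X - Polynomial.C r) * u = f := mul_divByMonic_eq_iff_isRoot.2 hr'.2
    have hu : u ≠ 0 := fun h => hf (by rw [← hfu, h, mul_zero])
    have hdegu : f.natDegree = u.natDegree + 1 := by
      rw [← hfu, natDegree_mul (X_sub_C_ne_zero r) hu, natDegree_X_sub_C]
      ring
    have hAf : appellR f.coeff n
        = derivative (appellR u.coeff n) - Polynomial.C r * appellR u.coeff n := by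
      rw [← hfu]
      exact appell_step u r n
    have hNP : NPolyR f S0ᶜ = NPolyR u S0ᶜ := by
      rw [← hfu, NPolyR_mul_root u hu hr'.1]
    rw [hAf, hNP]
    have hIH := ih u hu (by omega)
    rcases eq_or_ne (appellR u.coeff n) 0 with hAu | hAu
    · rw [hAu]
      simp
    rcases lt_or_eq_of_le hr'.1 with hrpos | hrzero
    · have hcard := R1 (appellR u.coeff n) hAu hrpos
      have hdeg2 := R1_deg (appellR u.coeff n) hAu hrpos
      omega
    · rw [← hrzero]
      simp only [map_zero, zero_mul, sub_zero]
      rcases eq_or_ne (derivative (appellR u.coeff n)) 0 with hdAu | hdAu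
      · rw [hdAu]
        simp
      have hD : (appellR u.coeff n).natDegree ≠ 0 := fun h =>
        hdAu (by rw [eq_C_of_natDegree_eq_zero h, derivative_C])
      have hdeg2 := natDegree_derivative_le (appellR u.coeff n)
      have hcard := R0 (appellR u.coeff n) hAu
      omega

lemma reflect_one_X_sub_C (w : ℂ) :
    Polynomial.reflect 1 (X - Polynomial.C w) = 1 - Polynomial.C w * X := by
  ext j
  rw [coeff_reflect]
  match j with
  | 0 => simp
  | 1 => simp [coeff_one]
  | (k+2) =>
    rw [revAt_eq_self_of_lt (by omega)]
    simp only [coeff_sub, coeff_X, coeff_C, coeff_one, coeff_C_mul]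
    rw [if_neg (by omega), if_neg (by omega), if_neg (by omega)]
    ring

lemma reflect_pow_factor (w : ℂ) (m : ℕ) :
    Polynomial.reflect m ((X - Polynomial.C w) ^ m) = (1 - Polynomial.C w * X) ^ m := by
  induction m with
  | zero =>
    ext j
    rw [pow_zero, pow_zero, coeff_reflect]
    rcases Nat.eq_zero_or_pos j with rfl | hj
    · rw [revAt_le (le_refl 0)]
    · rw [revAt_eq_self_of_lt hj]
  | succ m ih =>
    have h1 : (X - Polynomial.C w) ^ (m + 1)
        = (X - Polynomial.C w) ^ m * (X - Polynomial.C w) := pow_succ _ _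
    rw [h1]
    have h2 := Polynomial.reflect_mul ((X - Polynomial.C w) ^ m) (X - Polynomial.C w)
      (F := m) (G := 1)
      (by simpa [natDegree_pow, natDegree_X_sub_C] using le_rfl)
      (by rw [natDegree_X_sub_C])
    rw [h2, ih, reflect_one_X_sub_C, ← pow_succ]

lemma reflect_reflect' (p : Polynomial ℂ) (n : ℕ) :
    Polynomial.reflect n (Polynomial.reflect n p) = p := by
  ext j
  rw [coeff_reflect, coeff_reflect, revAt_invol]

lemma natDegree_reflect_le (p : Polynomial ℂ) (n : ℕ) (h : p.natDegree ≤ n) :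
    (Polynomial.reflect n p).natDegree ≤ n := by
  refine natDegree_le_iff_coeff_eq_zero.2 fun N hN => ?_
  rw [coeff_reflect, revAt_eq_self_of_lt hN]
  exact coeff_eq_zero_of_natDegree_lt (by omega)

lemma rootMult_reflect_ge (p : Polynomial ℂ) (hp : p ≠ 0) (n : ℕ) (hdeg : p.natDegree ≤ n)
    (z : ℂ) (hz : z ≠ 0) :
    p.rootMultiplicity z⁻¹ ≤ (Polynomial.reflect n p).rootMultiplicity z := by
  set m := p.rootMultiplicity z⁻¹ with hm
  have hrefl_ne : Polynomial.reflect n p ≠ 0 := by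
    rwa [Ne, Polynomial.reflect_eq_zero_iff]
  obtain ⟨q, hq⟩ := p.pow_rootMultiplicity_dvd z⁻¹
  rw [← hm] at hq
  have hq_ne : q ≠ 0 := by
    rintro rfl
    rw [mul_zero] at hq
    exact hp hq
  have hmdeg : m + q.natDegree = p.natDegree := by
    rw [hq, natDegree_mul (pow_ne_zero _ (X_sub_C_ne_zero _)) hq_ne, natDegree_pow,
      natDegree_X_sub_C, mul_one]
  have hrw : Polynomial.reflect n p
      = Polynomial.reflect m ((X - Polynomial.C z⁻¹) ^ m) * Polynomial.reflect (n - m) q := by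
    have hn : m + (n - m) = n := by omega
    have hd1 : ((X - Polynomial.C z⁻¹) ^ m).natDegree ≤ m := by
      rw [natDegree_pow, natDegree_X_sub_C, mul_one]
    have hd2 : q.natDegree ≤ n - m := by omega
    have h3 := Polynomial.reflect_mul ((X - Polynomial.C z⁻¹) ^ m) q hd1 hd2
    rw [hn] at h3
    rw [hq]
    exact h3
  rw [reflect_pow_factor] at hrw
  have hfac : (1 - Polynomial.C z⁻¹ * X) = Polynomial.C (-z⁻¹) * (X - Polynomial.C z) := by
    rw [mul_sub, ← C_mul]
    have : -z⁻¹ * z = -1 := by field_simp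
    rw [this]
    simp only [map_neg, map_one]
    ring
  have hdvd : (X - Polynomial.C z) ^ m ∣ Polynomial.reflect n p := by
    rw [hrw, hfac, mul_pow]
    exact Dvd.dvd.mul_right (dvd_mul_left _ _) _
  exact (le_rootMultiplicity_iff hrefl_ne).2 hdvd

lemma inv_mem_S0c {z : ℂ} (hz : z ≠ 0) (h : z⁻¹ ∈ S0ᶜ) : z ∈ S0ᶜ := by
  intro hzS0
  obtain ⟨x, hx, rfl⟩ := mem_S0_iff.1 hzS0
  refine h ?_
  rw [← Complex.ofReal_inv]
  exact ofReal_mem_S0 (by positivity)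

lemma zero_mem_S0 : (0 : ℂ) ∈ S0 := ⟨by simp, by simp⟩

open scoped Classical in
lemma NPoly_reflect_le (p : Polynomial ℂ) (hp : p ≠ 0) (n : ℕ) (hdegp : p.natDegree ≤ n) :
    NPoly (Polynomial.reflect n p) S0ᶜ ≤ NPoly p S0ᶜ := by
  set J := Polynomial.reflect n p with hJdef
  have hJ : J ≠ 0 := by rwa [hJdef, Ne, Polynomial.reflect_eq_zero_iff]
  have hJdeg : J.natDegree ≤ n := natDegree_reflect_le p n hdegp
  have hkey : Multiset.map (fun z : ℂ => z⁻¹) (J.roots.filter (fun z => z ∈ S0ᶜ))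
      ≤ p.roots.filter (fun z => z ∈ S0ᶜ) := by
    rw [Multiset.le_iff_count]
    intro w
    rw [Multiset.count_map]
    have hne : ∀ z ∈ J.roots.filter (fun z => z ∈ S0ᶜ), z ≠ 0 := by
      intro z hzmem
      have := (Multiset.mem_filter.1 hzmem).2
      intro hz0
      rw [hz0] at this
      exact this zero_mem_S0
    rcases eq_or_ne w 0 with rfl | hw
    · have : (Multiset.filter (fun a => (0:ℂ) = a⁻¹)
          (J.roots.filter (fun z => z ∈ S0ᶜ))) = 0 := by
        rw [Multiset.filter_eq_nil]
        intro z hzmem h0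
        exact inv_ne_zero (hne z hzmem) h0.symm
      rw [this]
      simp
    · have hcongr : Multiset.filter (fun a => w = a⁻¹) (J.roots.filter (fun z => z ∈ S0ᶜ))
          = Multiset.filter (fun a => w⁻¹ = a) (J.roots.filter (fun z => z ∈ S0ᶜ)) := by
        refine Multiset.filter_congr fun z hzmem => ?_
        constructor
        · rintro rfl; rw [inv_inv]
        · rintro rfl; rw [inv_inv]
      rw [hcongr]
      have hcnt : Multiset.card (Multiset.filter (fun a => w⁻¹ = a)
          (J.roots.filter (fun z => z ∈ S0ᶜ)))
          = (J.roots.filter (fun z => z ∈ S0ᶜ)).count w⁻¹ := by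
        rw [Multiset.count, Multiset.countP_eq_card_filter]
      rw [hcnt, Multiset.count_filter]
      split_ifs with hmem
      · have hwS0 : w ∈ S0ᶜ := inv_mem_S0c hw hmem
        rw [Multiset.count_filter, if_pos hwS0, count_roots, count_roots]
        have h1 : J.rootMultiplicity w⁻¹ ≤ (Polynomial.reflect n J).rootMultiplicity w :=
          rootMult_reflect_ge J hJ n hJdeg w hw
        rwa [hJdef, reflect_reflect'] at h1
      · simp
  have h2 := Multiset.card_le_card hkey
  rw [Multiset.card_map] at h2
  rw [NPoly, NPoly]
  convert h2 using 3 <;> exact Subsingleton.elim _ _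

/-- Proposition 3.1 (second part): the Jensen polynomials of a real polynomial have at
most as many zeros outside `[0,∞)` as the polynomial itself. -/
theorem statement11 (f : Polynomial ℝ) (n : ℕ) :
    NPolyR (jensenR (fun k => f.coeff k) n) S0ᶜ ≤ NPolyR f S0ᶜ := by
  rcases eq_or_ne f 0 with rfl | hf
  · have hj : jensenR (fun k => (0 : Polynomial ℝ).coeff k) n = 0 := by
      ext j; rw [jensen_coeff]; simp
    rw [hj]
  rcases eq_or_ne (appellR (fun k => f.coeff k) n) 0 with hA | hA
  · have hj : jensenR (fun k => f.coeff k) n = 0 := by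
      rw [jensen_eq_reflect, hA, Polynomial.reflect_zero]
    rw [hj]
    have h0 : NPolyR (0 : Polynomial ℝ) S0ᶜ = 0 := by simp [NPolyR, NPoly]
    omega
  have h1 : NPolyR (jensenR (fun k => f.coeff k) n) S0ᶜ
      ≤ NPoly ((appellR (fun k => f.coeff k) n).map (algebraMap ℝ ℂ)) S0ᶜ := by
    rw [NPolyR, jensen_eq_reflect, ← Polynomial.reflect_map]
    exact NPoly_reflect_le _ (map_ne _ hA) n
      (natDegree_map_le.trans (natDegree_appell_le _ n))
  have h2 : NPoly ((appellR (fun k => f.coeff k) n).map (algebraMap ℝ ℂ)) S0ᶜ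
      ≤ (appellR (fun k => f.coeff k) n).natDegree
        - Multiset.card (mm (appellR (fun k => f.coeff k) n)) := by
    have hc := NPoly_compl ((appellR (fun k => f.coeff k) n).map (algebraMap ℝ ℂ))
    have hcr := Polynomial.card_roots' ((appellR (fun k => f.coeff k) n).map (algebraMap ℝ ℂ))
    have hnd : ((appellR (fun k => f.coeff k) n).map (algebraMap ℝ ℂ)).natDegree
        ≤ (appellR (fun k => f.coeff k) n).natDegree := natDegree_map_le
    have hS0 := card_mm_le_filter_S0 (appellR (fun k => f.coeff k) n) hA
    omega
  have h3 : (appellR (fun k => f.coeff k) n).natDegree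
      - Multiset.card (mm (appellR (fun k => f.coeff k) n)) ≤ NPolyR f S0ᶜ :=
    mainR n f.natDegree f hf le_rfl
  omega
end
end

section
/- If f is a polynomial all of whose zeros lie in ℍ, then for every nonnegative integer n, all zeros of the n-th Jensen polynomial J(f,n) lie in ℍ. -/
noncomputable section
open Filter Polynomial Topology

open Polynomial

private lemma msum_nonpos {s : Multiset ℝ} (h : ∀ x ∈ s, x ≤ 0) : s.sum ≤ 0 := by
  induction s using Multiset.induction with
  | empty => simp
  | cons a t ih =>
    rw [Multiset.sum_cons]
    have := h a (Multiset.mem_cons_self a t)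
    have := ih (fun x hx => h x (Multiset.mem_cons_of_mem hx))
    linarith

private lemma msum_neg {s : Multiset ℝ} (hs : s ≠ 0) (h : ∀ x ∈ s, x < 0) : s.sum < 0 := by
  obtain ⟨a, ha⟩ := Multiset.exists_mem_of_ne_zero hs
  obtain ⟨t, rfl⟩ := Multiset.exists_cons_of_mem ha
  rw [Multiset.sum_cons]
  have h1 := h a (Multiset.mem_cons_self a t)
  have h2 : t.sum ≤ 0 := msum_nonpos (fun x hx => (h x (Multiset.mem_cons_of_mem hx)).le)
  linarith

private lemma logderiv_eval (z : ℂ) (t : Multiset ℂ) (ht : ∀ a ∈ t, z ≠ a) :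
    ((Polynomial.derivative ((t.map (fun a => X - C a)).prod)).eval z)
      = ((t.map (fun a => X - C a)).prod).eval z * (t.map (fun a => (z - a)⁻¹)).sum := by
  induction t using Multiset.induction with
  | empty => simp
  | cons a s ih =>
    have hza : z - a ≠ 0 := sub_ne_zero.mpr (ht a (Multiset.mem_cons_self a s))
    have ihs := ih (fun b hb => ht b (Multiset.mem_cons_of_mem hb))
    simp only [Multiset.map_cons, Multiset.prod_cons, Multiset.sum_cons, derivative_mul,
      derivative_sub, derivative_X, derivative_C, sub_zero, eval_add, eval_mul, eval_sub,
      eval_X, eval_C, eval_one, one_mul, ihs]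
    field_simp

private lemma stepA (p : Polynomial ℂ) (ρ : ℂ) (hρ : 0 ≤ ρ.im)
    (hp : ∀ z ∈ p.roots, z.im ≤ 0) :
    ∀ z ∈ (Polynomial.derivative p - Polynomial.C ρ * p).roots, z.im ≤ 0 := by
  intro z hz
  by_contra hzim
  push_neg at hzim
  obtain ⟨hq0, hqz⟩ := Polynomial.mem_roots'.mp hz
  have hp0 : p ≠ 0 := by
    rintro rfl
    simp at hq0
  have hpz : p.eval z ≠ 0 := by
    intro h
    exact absurd (hp z (Polynomial.mem_roots'.mpr ⟨hp0, h⟩)) (by linarith)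
  have hsplit := Polynomial.Splits.eq_prod_roots (IsAlgClosed.splits p)
  set Q : Polynomial ℂ := (p.roots.map (fun a => X - C a)).prod with hQ
  set c := p.leadingCoeff with hc
  have hc0 : c ≠ 0 := Polynomial.leadingCoeff_ne_zero.mpr hp0
  have hne : ∀ a ∈ p.roots, z ≠ a := by
    intro a ha h
    exact absurd (hp a ha) (by rw [← h]; linarith)
  have hQz : Q.eval z ≠ 0 := by
    rw [hQ, Polynomial.eval_multiset_prod]
    rw [Multiset.map_map]
    intro h0
    rw [Multiset.prod_eq_zero_iff] at h0
    rw [Multiset.mem_map] at h0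
    obtain ⟨a, ha, h0⟩ := h0
    simp only [Function.comp_apply, eval_sub, eval_X, eval_C] at h0
    exact hne a ha (sub_eq_zero.mp h0)
  -- derivative p at z equals ρ * p z
  have hder : (Polynomial.derivative p).eval z = ρ * p.eval z := by
    have := hqz
    simp only [Polynomial.IsRoot, eval_sub, eval_mul, eval_C] at this
    linear_combination this
  -- now use factorization
  have hderQ : (Polynomial.derivative p).eval z
      = c * (Polynomial.derivative Q).eval z := by
    rw [hsplit, Polynomial.derivative_C_mul, Polynomial.eval_C_mul]
  have hlog := logderiv_eval z p.roots hne
  set S : ℂ := (p.roots.map (fun a => (z - a)⁻¹)).sum with hS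
  have hpzQ : p.eval z = c * Q.eval z := by rw [hsplit, Polynomial.eval_C_mul]
  have hρS : ρ = S := by
    have h1 : c * (Q.eval z * S) = ρ * (c * Q.eval z) := by
      rw [← hlog, ← hderQ, ← hpzQ, hder]
    exact (mul_right_cancel₀ (mul_ne_zero hc0 hQz) (by linear_combination h1)).symm
  -- roots nonempty?
  rcases eq_or_ne p.roots 0 with hr0 | hr0
  · -- p is a nonzero constant, so ρ = 0 and derivative p = 0, contradiction
    have hρ0 : ρ = 0 := by rw [hρS, hS, hr0]; simp
    have hQ1 : Q = 1 := by rw [hQ, hr0]; simp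
    have : Polynomial.derivative p - C ρ * p = 0 := by
      rw [hρ0, hsplit, hQ1, mul_one, Polynomial.derivative_C]
      simp
    exact hq0 this
  · have hSim : S.im < 0 := by
      rw [hS]
      have : ((p.roots.map (fun a => (z - a)⁻¹)).sum).im
          = ((p.roots.map (fun a => ((z - a)⁻¹).im))).sum := by
        have h := map_multiset_sum Complex.imAddGroupHom
          (p.roots.map (fun a => (z - a)⁻¹))
        simpa [Multiset.map_map, Function.comp, Complex.imAddGroupHom] using h
      rw [this]
      apply msum_neg
      · simpa using hr0
      · intro x hx
        rw [Multiset.mem_map] at hx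
        obtain ⟨a, ha, rfl⟩ := hx
        rw [Complex.inv_im]
        have him : 0 < (z - a).im := by
          have := hp a ha
          simp only [Complex.sub_im]
          linarith
        have hnsq : 0 < Complex.normSq (z - a) :=
          Complex.normSq_pos.mpr (sub_ne_zero.mpr (hne a ha))
        exact div_neg_of_neg_of_pos (by linarith) hnsq
    rw [hρS] at hρ
    linarith

private def dEnd : Module.End ℂ (Polynomial ℂ) := Polynomial.derivative

private lemma auxPhi (n : ℕ) (s : Multiset ℂ) (hs : ∀ a ∈ s, 0 ≤ a.im) :
    ∀ z ∈ ((Polynomial.aeval dEnd ((s.map (fun a => X - C a)).prod))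
        ((X : Polynomial ℂ) ^ n)).roots, z.im ≤ 0 := by
  induction s using Multiset.induction with
  | empty =>
    intro z hz
    simp only [Multiset.map_zero, Multiset.prod_zero, map_one, Module.End.one_apply,
      Polynomial.roots_X_pow, Multiset.mem_nsmul, Multiset.mem_singleton] at hz
    rcases hz with ⟨-, rfl⟩
    simp
  | cons a t ih =>
    intro z hz
    have ha : 0 ≤ a.im := hs a (Multiset.mem_cons_self a t)
    have ht : ∀ b ∈ t, 0 ≤ b.im := fun b hb => hs b (Multiset.mem_cons_of_mem hb)
    set P : Polynomial ℂ := (Polynomial.aeval dEnd ((t.map (fun a => X - C a)).prod))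
        ((X : Polynomial ℂ) ^ n) with hP
    have key : (Polynomial.aeval dEnd (((a ::ₘ t).map (fun a => X - C a)).prod))
        ((X : Polynomial ℂ) ^ n) = Polynomial.derivative P - C a * P := by
      rw [Multiset.map_cons, Multiset.prod_cons, map_mul, Module.End.mul_apply,
        map_sub, Polynomial.aeval_X, Polynomial.aeval_C]
      rw [LinearMap.sub_apply, Module.algebraMap_end_apply, Polynomial.smul_eq_C_mul]
      rfl
    rw [key] at hz
    exact stepA P a ha (ih ht) z hz

private lemma cast_desc {n k : ℕ} (hk : k ≤ n) :
    ((n.factorial : ℂ) / ((n - k).factorial : ℂ)) = (n.descFactorial k : ℂ) := by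
  have h : ((n - k).factorial : ℂ) ≠ 0 := Nat.cast_ne_zero.mpr (Nat.factorial_ne_zero _)
  rw [div_eq_iff h, ← Nat.cast_mul, mul_comm, Nat.factorial_mul_descFactorial hk]

private lemma eval_jensen_eq (f : Polynomial ℂ) (n : ℕ) (z : ℂ) (hz : z ≠ 0) :
    (jensen (fun k => f.coeff k) n).eval z
      = z ^ n * ((Polynomial.aeval dEnd f) ((X : Polynomial ℂ) ^ n)).eval z⁻¹ := by
  set N := max (n + 1) (f.natDegree + 1) with hN
  have hdeg : f.natDegree < N := lt_of_lt_of_le (Nat.lt_succ_self _) (le_max_right _ _)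
  have hsum : (Polynomial.aeval dEnd f) ((X : Polynomial ℂ) ^ n)
      = ∑ i ∈ Finset.range N, f.coeff i • (dEnd ^ i) ((X : Polynomial ℂ) ^ n) := by
    rw [Polynomial.aeval_eq_sum_range' hdeg, LinearMap.sum_apply]
    simp_rw [LinearMap.smul_apply]
  rw [hsum]
  have hpow : ∀ i : ℕ, (dEnd ^ i) ((X : Polynomial ℂ) ^ n)
      = ((Nat.descFactorial n i : Polynomial ℂ)) * X ^ (n - i) := by
    intro i
    rw [Module.End.pow_apply]
    exact Polynomial.iterate_derivative_X_pow_eq_natCast_mul n i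
  have hL : (jensen (fun k => f.coeff k) n).eval z
      = ∑ i ∈ Finset.range N, (n.descFactorial i : ℂ) * f.coeff i * z ^ i := by
    rw [jensen, Polynomial.eval_finset_sum]
    have h1 : ∀ i ∈ Finset.range (n + 1),
        (Polynomial.C ((n.factorial : ℂ) / ((n - i).factorial : ℂ) * f.coeff i)
          * X ^ i).eval z = (n.descFactorial i : ℂ) * f.coeff i * z ^ i := by
      intro i hi
      rw [Finset.mem_range, Nat.lt_succ_iff] at hi
      rw [Polynomial.eval_mul, Polynomial.eval_C, Polynomial.eval_pow, Polynomial.eval_X,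
        cast_desc hi]
    rw [Finset.sum_congr rfl h1]
    apply Finset.sum_subset (Finset.range_subset_range.mpr (le_max_left (n + 1) (f.natDegree + 1)))
    intro i _ hi
    rw [Finset.mem_range, Nat.lt_succ_iff, not_le] at hi
    rw [Nat.descFactorial_eq_zero_iff_lt.mpr hi]
    simp
  have hR : ∀ i ∈ Finset.range N,
      Polynomial.eval z⁻¹ (f.coeff i • (dEnd ^ i) ((X : Polynomial ℂ) ^ n)) * z ^ n
        = (n.descFactorial i : ℂ) * f.coeff i * z ^ i := by
    intro i _
    rw [hpow i, Polynomial.eval_smul, smul_eq_mul, Polynomial.eval_mul, Polynomial.eval_pow,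
      Polynomial.eval_X, Polynomial.eval_natCast]
    rcases le_or_gt i n with h | h
    · have hzn : z ^ n = z ^ i * z ^ (n - i) := by rw [← pow_add, Nat.add_sub_cancel' h]
      rw [hzn]
      have hzi : z ^ (n - i) ≠ 0 := pow_ne_zero _ hz
      field_simp
      rw [mul_assoc, ← mul_pow, one_div_mul_cancel hz, one_pow, mul_one]
    · rw [Nat.descFactorial_eq_zero_iff_lt.mpr h]
      simp
  calc (jensen (fun k => f.coeff k) n).eval z
      = ∑ i ∈ Finset.range N, (n.descFactorial i : ℂ) * f.coeff i * z ^ i := hL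
    _ = ∑ i ∈ Finset.range N,
          Polynomial.eval z⁻¹ (f.coeff i • (dEnd ^ i) ((X : Polynomial ℂ) ^ n)) * z ^ n :=
        (Finset.sum_congr rfl hR).symm
    _ = z ^ n * (∑ i ∈ Finset.range N,
          f.coeff i • (dEnd ^ i) ((X : Polynomial ℂ) ^ n)).eval z⁻¹ := by
        rw [Polynomial.eval_finset_sum, ← Finset.sum_mul, mul_comm]

/-- Proposition 3.2: if all zeros of a complex polynomial lie in the closed upper half
plane, so do all zeros of each of its Jensen polynomials. -/
theorem statement12 (f : Polynomial ℂ) (n : ℕ)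
    (hzeros : ∀ z ∈ f.roots, 0 ≤ z.im) :
    ∀ z ∈ (jensen (fun k => f.coeff k) n).roots, 0 ≤ z.im := by
  intro z hz
  rcases eq_or_ne z 0 with rfl | hz0
  · simp
  by_cases hf : f = 0
  · subst hf
    have hj0 : jensen (fun k => (0 : Polynomial ℂ).coeff k) n = 0 := by
      simp [jensen]
    rw [hj0] at hz
    simp at hz
  obtain ⟨hjne, hjz⟩ := Polynomial.mem_roots'.mp hz
  set G : Polynomial ℂ := (Polynomial.aeval dEnd f) ((X : Polynomial ℂ) ^ n) with hG
  have hGz : G.eval z⁻¹ = 0 := by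
    have h := eval_jensen_eq f n z hz0
    rw [Polynomial.IsRoot] at hjz
    rw [hjz] at h
    exact ((mul_eq_zero.mp h.symm).resolve_left (pow_ne_zero n hz0))
  have hG0 : G ≠ 0 := by
    intro h0
    apply hjne
    apply Polynomial.eq_zero_of_infinite_isRoot
    apply Set.Infinite.mono _ ((Set.finite_singleton (0 : ℂ)).infinite_compl)
    intro w hw
    have hw0 : w ≠ 0 := Set.mem_compl_singleton_iff.mp hw
    have hwe := eval_jensen_eq f n w hw0
    rw [← hG, h0] at hwe
    simpa [Polynomial.IsRoot] using hwe
  have hmem : z⁻¹ ∈ G.roots := Polynomial.mem_roots'.mpr ⟨hG0, hGz⟩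
  have hsplit := Polynomial.Splits.eq_prod_roots (IsAlgClosed.splits f)
  have hc0 : f.leadingCoeff ≠ 0 := Polynomial.leadingCoeff_ne_zero.mpr hf
  have hGc : G = f.leadingCoeff •
      (Polynomial.aeval dEnd ((f.roots.map (fun a => X - C a)).prod))
        ((X : Polynomial ℂ) ^ n) := by
    conv_lhs => rw [hG, hsplit]
    rw [map_mul, Polynomial.aeval_C, Module.End.mul_apply, Module.algebraMap_end_apply]
  rw [hGc, Polynomial.roots_smul_nonzero _ hc0] at hmem
  have him := auxPhi n f.roots hzeros z⁻¹ hmem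
  rw [Complex.inv_im, neg_div, neg_nonpos] at him
  have hnsq : 0 < Complex.normSq z := Complex.normSq_pos.mpr hz0
  have h3 := mul_nonneg him hnsq.le
  rwa [div_mul_cancel₀ _ (ne_of_gt hnsq)] at h3
end
end

section
/- Let f be a formal power series with real coefficients, and for each nonnegative integer n set N_n = N(A(f,n); ℂ∖S_0). Then N_0 = 0 and N_n ≤ N_{n+1} for every nonnegative integer n, i.e. 0 = N_0 ≤ N_1 ≤ N_2 ≤ ⋯. -/
noncomputable section
open Filter Polynomial Topology

section Aux

open Polynomial

/-- Filtered version of `card_roots_toFinset_le_card_roots_derivative_diff_roots_succ`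
for roots in `[0, ∞)`. -/
private lemma filtered_card_roots_toFinset (p : ℝ[X]) :
    (p.roots.filter (fun x => 0 ≤ x)).toFinset.card ≤
      (((derivative p).roots.filter (fun x => 0 ≤ x)).toFinset \
        (p.roots.filter (fun x => 0 ≤ x)).toFinset).card + 1 := by
  rcases eq_or_ne (derivative p) 0 with hp' | hp'
  · rw [eq_C_of_derivative_eq_zero hp', roots_C]
    simp
  have hp : p ≠ 0 := ne_of_apply_ne derivative (by rwa [derivative_zero])
  refine Finset.card_le_diff_of_interleaved fun x hx y hy hxy _ => ?_
  rw [Multiset.mem_toFinset, Multiset.mem_filter, mem_roots hp] at hx hy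
  obtain ⟨z, hz1, hz2⟩ := exists_deriv_eq_zero hxy p.continuousOn (hx.1.trans hy.1.symm)
  refine ⟨z, ?_, hz1⟩
  rw [Multiset.mem_toFinset, Multiset.mem_filter, mem_roots hp']
  exact ⟨by rw [IsRoot, ← p.deriv]; exact hz2, hx.2.trans hz1.1.le⟩

/-- Filtered version of `card_roots_le_derivative` for roots in `[0, ∞)`. -/
private lemma filtered_card_roots_le (p : ℝ[X]) :
    Multiset.card (p.roots.filter (fun x => 0 ≤ x)) ≤
      Multiset.card ((derivative p).roots.filter (fun x => 0 ≤ x)) + 1 := by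
  set R := p.roots.filter (fun x => 0 ≤ x) with hR
  set D := (derivative p).roots.filter (fun x => 0 ≤ x) with hD
  calc Multiset.card R = ∑ x ∈ R.toFinset, R.count x := (Multiset.toFinset_sum_count_eq _).symm
    _ = ∑ x ∈ R.toFinset, (R.count x - 1 + 1) :=
        (Finset.sum_congr rfl fun x hx => tsub_add_cancel_of_le <|
          Nat.succ_le_iff.2 <| Multiset.count_pos.2 <| Multiset.mem_toFinset.1 hx).symm
    _ = (∑ x ∈ R.toFinset, (R.count x - 1)) + R.toFinset.card := by
        rw [Finset.sum_add_distrib, ← Finset.card_eq_sum_ones]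
    _ ≤ (∑ x ∈ R.toFinset, D.count x) + ((D.toFinset \ R.toFinset).card + 1) := by
        refine add_le_add (Finset.sum_le_sum fun x hx => ?_) (filtered_card_roots_toFinset p)
        have h0 : 0 ≤ x := by
          have hx' := Multiset.mem_toFinset.1 hx
          rw [hR, Multiset.mem_filter] at hx'
          exact hx'.2
        rw [hR, hD, Multiset.count_filter_of_pos h0, Multiset.count_filter_of_pos h0,
          count_roots, count_roots]
        exact rootMultiplicity_sub_one_le_derivative_rootMultiplicity _ _
    _ ≤ (∑ x ∈ R.toFinset, D.count x) +
          ((∑ x ∈ D.toFinset \ R.toFinset, D.count x) + 1) := by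
        refine add_le_add_right (add_le_add_left ((Finset.card_eq_sum_ones _).trans_le ?_) _) _
        refine Finset.sum_le_sum fun x hx => Nat.succ_le_iff.2 ?_
        rw [Multiset.count_pos, ← Multiset.mem_toFinset]
        exact (Finset.mem_sdiff.1 hx).1
    _ = Multiset.card D + 1 := by
        rw [← add_assoc, ← Finset.sum_union Finset.disjoint_sdiff,
          Finset.union_sdiff_self_eq_union, ← Multiset.toFinset_sum_count_eq,
          ← Finset.sum_subset Finset.subset_union_right]
        intro x _ hx₂
        simpa only [Multiset.mem_toFinset, Multiset.count_eq_zero] using hx₂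

open scoped Classical in
/-- Complex roots of a real polynomial lying on `S0` are real nonnegative roots. -/
private lemma filter_S0_roots_map (p : ℝ[X]) :
    ((p.map (algebraMap ℝ ℂ)).roots.filter (fun z => z ∈ S0)) =
      (p.roots.filter (fun x => (0:ℝ) ≤ x)).map (fun x : ℝ => (x : ℂ)) := by
  have hτ : Function.Injective (algebraMap ℝ ℂ) := (algebraMap ℝ ℂ).injective
  ext z
  rw [Multiset.count_filter]
  by_cases hz : z ∈ S0
  · obtain ⟨him, hre⟩ := hz
    have hzeq : z = ((z.re : ℝ) : ℂ) := by
      apply Complex.ext <;> simp [him]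
    rw [if_pos ⟨him, hre⟩, hzeq,
      Multiset.count_map_eq_count' _ _ Complex.ofReal_injective,
      Multiset.count_filter_of_pos hre, count_roots, count_roots]
    exact (eq_rootMultiplicity_map hτ z.re).symm
  · rw [if_neg hz]
    symm
    rw [Multiset.count_eq_zero]
    intro hmem
    obtain ⟨x, hx, rfl⟩ := Multiset.mem_map.1 hmem
    have hx' := (Multiset.mem_filter.1 hx).2
    exact hz ⟨by simp, by simpa using hx'⟩

private lemma NPoly_add_compl (q : Polynomial ℂ) (X : Set ℂ) :
    NPoly q X + NPoly q Xᶜ = Multiset.card q.roots := by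
  classical
  rw [NPoly, NPoly, ← Multiset.card_add]
  simp only [Set.mem_compl_iff]
  rw [Multiset.filter_add_not]

private lemma NPoly_S0_eq (p : Polynomial ℝ) :
    NPoly (p.map (algebraMap ℝ ℂ)) S0 =
      Multiset.card (p.roots.filter (fun x => (0:ℝ) ≤ x)) := by
  classical
  rw [NPoly, filter_S0_roots_map p, Multiset.card_map]

private lemma card_roots_complex (q : Polynomial ℂ) :
    Multiset.card q.roots = q.natDegree :=
  (splits_iff_card_roots.1 (IsAlgClosed.splits q)).symm ▸ rfl

/-- Key monotonicity lemma: differentiation does not increase the number of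
zeros off the nonnegative real axis. -/
private lemma NPolyR_derivative_le (p : ℝ[X]) :
    NPolyR (derivative p) S0ᶜ ≤ NPolyR p S0ᶜ := by
  classical
  rcases eq_or_ne (derivative p) 0 with h0 | hd0
  · simp [h0, NPolyR, NPoly]
  have hp0 : p ≠ 0 := fun h => hd0 (by simp [h])
  have hτ : Function.Injective (algebraMap ℝ ℂ) := (algebraMap ℝ ℂ).injective
  set P := p.map (algebraMap ℝ ℂ) with hPdef
  set D := (derivative p).map (algebraMap ℝ ℂ) with hDdef
  -- total root counts over ℂ
  have hcardP : Multiset.card P.roots = p.natDegree := by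
    rw [card_roots_complex, hPdef, natDegree_map]
  have hcardD : Multiset.card D.roots = (derivative p).natDegree := by
    rw [card_roots_complex, hDdef, natDegree_map]
  -- degree relation
  have hpdeg : p.natDegree ≠ 0 := by
    intro h
    exact hd0 (derivative_of_natDegree_zero h)
  have hdeg : (derivative p).natDegree + 1 = p.natDegree := by
    have := degree_derivative_eq p (Nat.pos_of_ne_zero hpdeg)
    have h2 : (derivative p).natDegree = p.natDegree - 1 :=
      natDegree_eq_of_degree_eq_some this
    omega
  -- splitting of complex roots into S0-part and complement
  have hsplitP : NPoly P S0 + NPolyR p S0ᶜ = Multiset.card P.roots := NPoly_add_compl P S0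
  have hsplitD : NPoly D S0 + NPolyR (derivative p) S0ᶜ = Multiset.card D.roots :=
    NPoly_add_compl D S0
  -- correspondence with real roots
  have hcorrP : NPoly P S0 = Multiset.card (p.roots.filter (fun x => (0:ℝ) ≤ x)) :=
    NPoly_S0_eq p
  have hcorrD : NPoly D S0
      = Multiset.card ((derivative p).roots.filter (fun x => (0:ℝ) ≤ x)) :=
    NPoly_S0_eq (derivative p)
  have hkey := filtered_card_roots_le p
  omega

/-- The derivative of the `(n+1)`-st Appell polynomial is `(n+1)` times the `n`-th. -/
private lemma appell_derivative (a : ℕ → ℝ) (n : ℕ) :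
    derivative (appellR a (n + 1)) = C (((n : ℝ) + 1)) * appellR a n := by
  unfold appellR
  rw [derivative_sum, Finset.sum_range_succ, Finset.mul_sum]
  have hlast : derivative (C (((n+1).factorial : ℝ) / (((n+1) - (n+1)).factorial : ℝ) * a (n+1))
      * X ^ ((n+1) - (n+1))) = 0 := by
    simp only [Nat.sub_self, pow_zero, mul_one, derivative_C]
  rw [hlast, add_zero]
  refine Finset.sum_congr rfl fun k hk => ?_
  have hk' : k ≤ n := Nat.lt_succ_iff.1 (Finset.mem_range.1 hk)
  have h1 : n + 1 - k = (n - k) + 1 := by omega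
  rw [derivative_C_mul_X_pow, h1]
  have h2 : (n - k) + 1 - 1 = n - k := by omega
  rw [h2]
  rw [← mul_assoc, ← C_mul]
  congr 2
  have hf1 : (((n+1).factorial : ℝ)) = ((n:ℝ) + 1) * (n.factorial : ℝ) := by
    rw [Nat.factorial_succ]; push_cast; ring
  have hf2 : ((((n - k) + 1).factorial : ℝ)) = (((n - k : ℕ) : ℝ) + 1) * ((n - k).factorial : ℝ) := by
    rw [Nat.factorial_succ]; push_cast; ring
  have hne1 : (((n - k : ℕ) : ℝ) + 1) ≠ 0 := by positivity
  have hne2 : ((n - k).factorial : ℝ) ≠ 0 := Nat.cast_ne_zero.2 (Nat.factorial_ne_zero _)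
  have h3 : ((n - k + 1 : ℕ) : ℝ) = ((n - k : ℕ) : ℝ) + 1 := by push_cast [Nat.cast_ofNat]; ring
  rw [hf1, hf2, h3]
  generalize ((n - k).factorial : ℝ) = f at hne2 ⊢
  generalize ((n - k : ℕ) : ℝ) = x at hne1 ⊢
  field_simp

end Aux

/-- Theorem 3.5 (1): the numbers `N_n = N(A(f,n); ℂ∖S₀)` satisfy `0 = N₀ ≤ N₁ ≤ N₂ ≤ ⋯`. -/
theorem statement15 (a : ℕ → ℝ) :
    NPolyR (appellR a 0) S0ᶜ = 0 ∧
    ∀ n : ℕ, NPolyR (appellR a n) S0ᶜ ≤ NPolyR (appellR a (n + 1)) S0ᶜ := by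
  constructor
  · have h0 : appellR a 0 = Polynomial.C ((Nat.factorial 0 : ℝ) / ((Nat.factorial (0-0)) : ℝ) * a 0) := by
      unfold appellR
      simp
    rw [h0]
    simp [NPolyR, NPoly]
  · intro n
    have h1 : NPolyR (appellR a n) S0ᶜ = NPolyR (Polynomial.derivative (appellR a (n+1))) S0ᶜ := by
      rw [appell_derivative]
      unfold NPolyR NPoly
      rw [Polynomial.map_mul, Polynomial.map_C, Polynomial.roots_C_mul]
      simp only [map_ne_zero_iff _ (algebraMap ℝ ℂ).injective]
      positivity
    rw [h1]
    exact NPolyR_derivative_le (appellR a (n+1))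
end
end

section
/- Let f be a formal power series with real coefficients, and for each nonnegative integer n set N_n = N(A(f,n); ℂ∖ℝ). Then N_0 = N_1 = 0 and N_n ≤ N_{n+1} for every n ≥ 1, i.e. 0 = N_0 = N_1 ≤ N_2 ≤ N_3 ≤ ⋯. -/
noncomputable section
open Filter Polynomial Topology

lemma filter_im_zero (p : Polynomial ℝ) :
    ((p.map (algebraMap ℝ ℂ)).roots.filter (fun z => z.im = 0)) =
      p.roots.map (Complex.ofReal) := by
  classical
  refine Multiset.ext.2 fun z => ?_
  rw [Multiset.count_filter]
  by_cases hz : z.im = 0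
  · simp only [hz, if_true]
    obtain ⟨x, rfl⟩ : ∃ x : ℝ, (x : ℂ) = z := ⟨z.re, Complex.ext rfl hz.symm⟩
    rw [Multiset.count_map_eq_count' _ _ Complex.ofReal_injective,
      Polynomial.count_roots, Polynomial.count_roots,
      Polynomial.eq_rootMultiplicity_map (f := algebraMap ℝ ℂ)
        (fun u v huv => by simpa using huv) x]
    rfl
  · simp only [hz, if_false]
    symm
    rw [Multiset.count_eq_zero]
    intro hmem
    obtain ⟨x, _, rfl⟩ := Multiset.mem_map.1 hmem
    exact hz (Complex.ofReal_im x)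

lemma NPoly_eq (g : Polynomial ℂ) (X : Set ℂ) [inst : DecidablePred (fun z => z ∈ X)] :
    NPoly g X = Multiset.card (g.roots.filter (fun z => z ∈ X)) := by
  unfold NPoly
  exact congrArg Multiset.card
    (@Multiset.filter_congr ℂ _ _ (fun z => Classical.propDecidable _) inst _ fun _ _ => Iff.rfl)

lemma key_count (p : Polynomial ℝ) (hp : p ≠ 0) :
    NPolyR p {z : ℂ | z.im ≠ 0} + Multiset.card p.roots = p.natDegree := by
  classical
  have hq : p.map (algebraMap ℝ ℂ) ≠ 0 :=
    (Polynomial.map_ne_zero_iff (algebraMap ℝ ℂ).injective).2 hp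
  have hsplit : Multiset.card (p.map (algebraMap ℝ ℂ)).roots
      = (p.map (algebraMap ℝ ℂ)).natDegree :=
    (Polynomial.splits_iff_card_roots).1 (IsAlgClosed.splits _)
  have hnd : (p.map (algebraMap ℝ ℂ)).natDegree = p.natDegree :=
    Polynomial.natDegree_map _
  have hfilt := Multiset.filter_add_not (fun z : ℂ => z ∈ {z : ℂ | z.im ≠ 0})
    (p.map (algebraMap ℝ ℂ)).roots
  have hcard := congrArg Multiset.card hfilt
  rw [Multiset.card_add] at hcard
  have h2 : Multiset.card (Multiset.filter
      (fun z : ℂ => ¬ z ∈ {z : ℂ | z.im ≠ 0}) (p.map (algebraMap ℝ ℂ)).roots)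
      = Multiset.card p.roots := by
    have : Multiset.filter (fun z : ℂ => ¬ z ∈ {z : ℂ | z.im ≠ 0})
        (p.map (algebraMap ℝ ℂ)).roots
        = Multiset.filter (fun z : ℂ => z.im = 0) (p.map (algebraMap ℝ ℂ)).roots := by
      refine Multiset.filter_congr fun z _ => ?_
      simp [Set.mem_setOf_eq]
    rw [this, filter_im_zero, Multiset.card_map]
  rw [h2] at hcard
  unfold NPolyR
  rw [NPoly_eq]
  rw [hcard, hsplit, hnd]

lemma NPolyR_deriv_le (p : Polynomial ℝ) :
    NPolyR (Polynomial.derivative p) {z : ℂ | z.im ≠ 0} ≤ NPolyR p {z : ℂ | z.im ≠ 0} := by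
  by_cases hd : Polynomial.derivative p = 0
  · rw [hd]
    unfold NPolyR
    rw [NPoly_eq]
    simp
  have hp : p ≠ 0 := by rintro rfl; simp at hd
  have h1 := key_count p hp
  have h2 := key_count _ hd
  have h3 := Polynomial.card_roots_le_derivative p
  have h4 : (Polynomial.derivative p).natDegree + 1 ≤ p.natDegree := by
    have h5 := Polynomial.natDegree_derivative_le p
    have h6 : p.natDegree ≠ 0 := by
      intro h
      exact hd (by rw [Polynomial.eq_C_of_natDegree_eq_zero h]; simp)
    omega
  omega

lemma derivative_appellR (a : ℕ → ℝ) (n : ℕ) :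
    Polynomial.derivative (appellR a (n + 1)) = Polynomial.C ((n : ℝ) + 1) * appellR a n := by
  unfold appellR
  rw [Finset.sum_range_succ, map_add, map_sum, Finset.mul_sum]
  have h0 : Polynomial.derivative
      (Polynomial.C (((n+1).factorial : ℝ) / (((n+1) - (n+1)).factorial : ℝ) * a (n+1)) *
        Polynomial.X ^ ((n+1) - (n+1))) = 0 := by
    simp
  rw [h0, add_zero]
  refine Finset.sum_congr rfl fun k hk => ?_
  have hk' : k ≤ n := Nat.lt_succ_iff.1 (Finset.mem_range.1 hk)
  rw [Polynomial.derivative_C_mul_X_pow]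
  have e2 : (n + 1 - k) - 1 = n - k := by omega
  rw [e2, ← mul_assoc, ← Polynomial.C_mul]
  congr 1
  have e1 : n + 1 - k = (n - k) + 1 := by omega
  rw [e1]
  generalize n - k = m
  rw [Nat.factorial_succ m, Nat.factorial_succ n]
  have hm : ((m.factorial : ℝ)) ≠ 0 := Nat.cast_ne_zero.2 (Nat.factorial_ne_zero _)
  have hm1 : ((m : ℝ) + 1) ≠ 0 := by positivity
  push_cast
  field_simp

/-- Theorem 3.6 (1): the numbers `N_n = N(A(f,n); ℂ∖ℝ)` satisfy
`0 = N₀ = N₁ ≤ N₂ ≤ N₃ ≤ ⋯`. -/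
theorem statement18 (a : ℕ → ℝ) :
    NPolyR (appellR a 0) {z : ℂ | z.im ≠ 0} = 0 ∧
    NPolyR (appellR a 1) {z : ℂ | z.im ≠ 0} = 0 ∧
    ∀ n : ℕ, 1 ≤ n →
      NPolyR (appellR a n) {z : ℂ | z.im ≠ 0} ≤
        NPolyR (appellR a (n + 1)) {z : ℂ | z.im ≠ 0} := by

  classical
  have hcoeffs : ∀ p : Polynomial ℝ, (∀ z ∈ (p.map (algebraMap ℝ ℂ)).roots, z.im = 0) →
      NPolyR p {z : ℂ | z.im ≠ 0} = 0 := by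
    intro p h
    unfold NPolyR
    rw [NPoly_eq, Multiset.card_eq_zero, Multiset.filter_eq_nil]
    intro z hz
    simp only [Set.mem_setOf_eq, not_not]
    exact h z hz
  have h0 : appellR a 0 = Polynomial.C (a 0) := by
    unfold appellR; simp [Nat.factorial]
  have h1 : appellR a 1 = Polynomial.C (a 0) * Polynomial.X + Polynomial.C (a 1) := by
    unfold appellR
    rw [Finset.sum_range_succ, Finset.sum_range_one]
    simp [Nat.factorial]
  refine ⟨?_, ?_, ?_⟩
  · apply hcoeffs
    rw [h0]
    intro z hz
    simp [Polynomial.map_C] at hz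
  · apply hcoeffs
    rw [h1]
    intro z hz
    have hz' := Polynomial.mem_roots'.1 hz
    have hne := hz'.1
    have heval : (a 0 : ℂ) * z + (a 1 : ℂ) = 0 := by
      have := hz'.2
      simpa [Polynomial.IsRoot, Polynomial.eval_map] using this
    by_cases ha : a 0 = 0
    · exfalso
      apply hne
      have h1' : a 1 = 0 := by
        have hc : ((a 1 : ℂ)) = 0 := by rw [ha] at heval; simpa using heval
        exact_mod_cast hc
      simp [ha, h1']
    · have : z = ((-(a 1) / (a 0) : ℝ) : ℂ) := by
        have ha' : (a 0 : ℂ) ≠ 0 := by exact_mod_cast ha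
        push_cast
        field_simp
        linear_combination heval
      rw [this, Complex.ofReal_im]
  · intro n _
    have := NPolyR_deriv_le (appellR a (n + 1))
    rw [derivative_appellR] at this
    have hC : NPolyR (Polynomial.C ((n : ℝ) + 1) * appellR a n) {z : ℂ | z.im ≠ 0}
        = NPolyR (appellR a n) {z : ℂ | z.im ≠ 0} := by
      unfold NPolyR
      rw [NPoly_eq, NPoly_eq, Polynomial.map_mul, Polynomial.map_C, Polynomial.roots_C_mul]
      intro hcontra
      rw [_root_.map_eq_zero] at hcontra
      exact Nat.cast_add_one_ne_zero n hcontra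
    rw [hC] at this
    exact this
end
end
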